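/- arXiv:2603.16836 — 6 statements merged into one kernel-verified Lean document; each statement's English description precedes it below -/
import Mathlib

section
/- (Subadditivity of rk* in distinct degrees) Let g and h be polynomials over a field F (in the same variables) with deg(g) ≠ deg(h). Then rk*(g + h) ≤ rk*(g) + rk*(h) (with the convention that the inequality is trivially true if rk*(g) or rk*(h) is infinite). -/
open MvPolynomial

/-- Discrete derivative of `f : V → F` in direction `v`: `Δ_v f (x) = f (x+v) - f x`. -/
def discDeriv {V F : Type*} [Add V] [Sub F] (v : V) (f : V → F) : V → F :=
  fun x => f (x + v) - f x

/-- Iterated discrete derivative `Δ^d_{v} f = Δ_{v (d-1)} ⋯ Δ_{v 0} f`. -/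
def iterDDeriv {V F : Type*} [Add V] [Sub F] : (d : ℕ) → (Fin d → V) → (V → F) → V → F
  | 0, _, f => f
  | d + 1, v, f => discDeriv (v (Fin.last d)) (iterDDeriv d (fun i => v i.castSucc) f)

/-- Complex bias `𝔟(f)` of a function with respect to an additive character `χ`. -/
noncomputable def cbias {F α : Type*} [AddGroup F] [Fintype α] (χ : AddChar F ℂ)
    (f : α → F) : ℂ :=
  (Fintype.card α : ℂ)⁻¹ * ∑ x, χ (f x)

/-- Bias `bias(f) = |𝔟(f)|`. -/
noncomputable def bias {F α : Type*} [AddGroup F] [Fintype α] (χ : AddChar F ℂ)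
    (f : α → F) : ℝ :=
  ‖cbias χ f‖

/-- `bias(Δ^d f)`: the bias of the order-`d` discrete derivative of `f`,
averaged over the base point and all `d` directions. -/
noncomputable def biasDD {F : Type*} [AddGroup F] [Fintype F] {n : ℕ} (χ : AddChar F ℂ)
    (d : ℕ) (f : (Fin n → F) → F) : ℝ :=
  bias χ (fun p : (Fin n → F) × (Fin d → Fin n → F) => iterDDeriv d p.2 f p.1)

/-- Formal directional derivative `∂_c f = Σ_i c_i ∂f/∂x_i`. -/
noncomputable def dirDeriv {F : Type*} [CommSemiring F] {n : ℕ} (c : Fin n → F)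
    (f : MvPolynomial (Fin n) F) : MvPolynomial (Fin n) F :=
  ∑ i, MvPolynomial.C (c i) * MvPolynomial.pderiv i f

/-- A rank decomposition of length `r` for a form `g` of degree `k`:
`g = Σ_{i=1}^r a_i b_i` with `a_i, b_i` forms of positive degrees summing to `k`. -/
def HasRankDecomp {F : Type*} [CommSemiring F] {n : ℕ} (k : ℕ) (g : MvPolynomial (Fin n) F)
    (r : ℕ) : Prop :=
  ∃ (a b : Fin r → MvPolynomial (Fin n) F) (da db : Fin r → ℕ),
    g = ∑ i, a i * b i ∧
      ∀ i, (a i).IsHomogeneous (da i) ∧ (b i).IsHomogeneous (db i) ∧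
        0 < da i ∧ 0 < db i ∧ da i + db i = k

/-- The rank (Schmidt rank/strength) of a form `g` of degree `k`, as an extended natural. -/
noncomputable def formRank {F : Type*} [CommSemiring F] {n : ℕ} (k : ℕ)
    (g : MvPolynomial (Fin n) F) : ℕ∞ :=
  sInf {N : ℕ∞ | ∃ r : ℕ, N = r ∧ HasRankDecomp k g r}

/-- A `rk*`-decomposition of length `r` of a polynomial `f`: `f = Σ_{i=1}^r α_i β_i`
with `α_i, β_i` non-constant, `deg α_i ≤ deg β_i`, `deg (α_i β_i) ≤ deg f`, and the
degree-1 factors `α_i` of the products of full degree are affinely independent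
(i.e. their homogeneous linear parts are linearly independent). -/
def HasRkStarDecomp {F : Type*} [Field F] {n : ℕ} (f : MvPolynomial (Fin n) F)
    (r : ℕ) : Prop :=
  ∃ a b : Fin r → MvPolynomial (Fin n) F,
    f = ∑ i, a i * b i ∧
    (∀ i, 1 ≤ (a i).totalDegree) ∧
    (∀ i, (a i).totalDegree ≤ (b i).totalDegree) ∧
    (∀ i, (a i * b i).totalDegree ≤ f.totalDegree) ∧
    LinearIndependent F
      (fun i : {i : Fin r // (a i).totalDegree = 1 ∧ (a i * b i).totalDegree = f.totalDegree} =>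
        MvPolynomial.homogeneousComponent 1 (a i.1))

/-- The rank `rk*` of a polynomial: the least length of a `rk*`-decomposition (`⊤` if none). -/
noncomputable def rkStar {F : Type*} [Field F] {n : ℕ} (f : MvPolynomial (Fin n) F) : ℕ∞ :=
  sInf {N : ℕ∞ | ∃ r : ℕ, N = r ∧ HasRkStarDecomp f r}

/-- A polynomial in the `d` blocks of variables `Fin d × Fin n` is multilinear with respect
to the set `I` of blocks if each monomial in its support has exactly one variable from each
block in `I` and no variables from blocks outside `I`. -/
def IsMultilinearOn {F : Type*} [CommSemiring F] {d n : ℕ} (I : Finset (Fin d))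
    (T : MvPolynomial (Fin d × Fin n) F) : Prop :=
  ∀ m ∈ T.support, (∀ t, t ∈ I → ∑ j : Fin n, m (t, j) = 1) ∧
    (∀ t, t ∉ I → ∀ j, m (t, j) = 0)

/-- A partition-rank decomposition of length `r` of a `d`-linear form `T`. -/
def HasPRDecomp {F : Type*} [CommSemiring F] {d n : ℕ}
    (T : MvPolynomial (Fin d × Fin n) F) (r : ℕ) : Prop :=
  ∃ (R Q : Fin r → MvPolynomial (Fin d × Fin n) F) (I : Fin r → Finset (Fin d)),
    T = ∑ i, R i * Q i ∧
    ∀ i, (I i).Nonempty ∧ I i ≠ Finset.univ ∧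
      IsMultilinearOn (I i) (R i) ∧ IsMultilinearOn (I i)ᶜ (Q i)

/-- The partition rank of a multilinear form, as an extended natural. -/
noncomputable def partitionRank {F : Type*} [CommSemiring F] {d n : ℕ}
    (T : MvPolynomial (Fin d × Fin n) F) : ℕ∞ :=
  sInf {N : ℕ∞ | ∃ r : ℕ, N = r ∧ HasPRDecomp T r}


lemma rkStar_exists_min {F : Type*} [Field F] {n : ℕ} {f : MvPolynomial (Fin n) F}
    (hf : rkStar f ≠ ⊤) : ∃ r : ℕ, rkStar f = r ∧ HasRkStarDecomp f r := by
  have h1 : rkStar f < rkStar f + 1 := by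
    rw [ENat.lt_add_one_iff hf]
  rw [rkStar] at h1
  obtain ⟨a, ha, halt⟩ := sInf_lt_iff.mp h1
  obtain ⟨r, rfl, hdec⟩ := ha
  have h2 : rkStar f ≤ r := sInf_le ⟨r, rfl, hdec⟩
  have h3 : (r : ℕ∞) ≤ rkStar f := by
    rw [← ENat.lt_add_one_iff hf]
    exact halt
  exact ⟨r, le_antisymm h2 h3, hdec⟩

lemma hasRkStarDecomp_add {F : Type*} [Field F] {n : ℕ} {g h : MvPolynomial (Fin n) F}
    (hlt : h.totalDegree < g.totalDegree) {r s : ℕ}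
    (hg : HasRkStarDecomp g r) (hh : HasRkStarDecomp h s) :
    HasRkStarDecomp (g + h) (r + s) := by
  classical
  obtain ⟨ag, bg, hgsum, hg1, hg2, hg3, hgli⟩ := hg
  obtain ⟨ah, bh, hhsum, hh1, hh2, hh3, -⟩ := hh
  have hdf : (g + h).totalDegree = g.totalDegree :=
    MvPolynomial.totalDegree_add_eq_left_of_totalDegree_lt hlt
  set e := (finSumFinEquiv : Fin r ⊕ Fin s ≃ Fin (r + s)) with he
  refine ⟨fun i => Sum.elim ag ah (e.symm i), fun i => Sum.elim bg bh (e.symm i),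
    ?_, ?_, ?_, ?_, ?_⟩
  · rw [hgsum, hhsum]
    have : ∑ i : Fin (r + s), Sum.elim ag ah (e.symm i) * Sum.elim bg bh (e.symm i)
        = ∑ j : Fin r ⊕ Fin s, Sum.elim ag ah j * Sum.elim bg bh j :=
      Equiv.sum_comp e.symm (fun j => Sum.elim ag ah j * Sum.elim bg bh j)
    rw [show ∑ i : Fin (r + s), (fun i => Sum.elim ag ah (e.symm i)) i *
        (fun i => Sum.elim bg bh (e.symm i)) i
        = ∑ i : Fin (r + s), Sum.elim ag ah (e.symm i) * Sum.elim bg bh (e.symm i) from rfl,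
      this, Fintype.sum_sum_type]
    simp
  · intro i
    rcases hji : e.symm i with j | j <;> simp only [hji, Sum.elim_inl, Sum.elim_inr]
    · exact hg1 j
    · exact hh1 j
  · intro i
    rcases hji : e.symm i with j | j <;> simp only [hji, Sum.elim_inl, Sum.elim_inr]
    · exact hg2 j
    · exact hh2 j
  · intro i
    rw [hdf]
    rcases hji : e.symm i with j | j <;> simp only [hji, Sum.elim_inl, Sum.elim_inr]
    · exact hg3 j
    · exact (hh3 j).trans hlt.le
  · have key : ∀ i : {i : Fin (r + s) //
        (Sum.elim ag ah (e.symm i)).totalDegree = 1 ∧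
        ((Sum.elim ag ah (e.symm i)) * (Sum.elim bg bh (e.symm i))).totalDegree
          = (g + h).totalDegree},
        ∃ j : {j : Fin r // (ag j).totalDegree = 1 ∧
          (ag j * bg j).totalDegree = g.totalDegree}, e.symm i.1 = Sum.inl j.1 := by
      rintro ⟨i, h1, h2⟩
      rcases hji : e.symm i with j | j
      · rw [hji] at h1 h2
        exact ⟨⟨j, by simpa using h1, by rw [← hdf]; simpa using h2⟩, by simp [hji]⟩
      · exfalso
        rw [hji] at h2
        simp only [Sum.elim_inr] at h2
        have := (hh3 j).trans_lt hlt
        rw [h2, hdf] at this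
        exact lt_irrefl _ this
    choose φ hφ using key
    have hinj : Function.Injective φ := by
      intro i i' hii
      apply Subtype.ext
      apply e.symm.injective
      rw [hφ i, hφ i', hii]
    have heq : (fun i : {i : Fin (r + s) //
        (Sum.elim ag ah (e.symm i)).totalDegree = 1 ∧
        ((Sum.elim ag ah (e.symm i)) * (Sum.elim bg bh (e.symm i))).totalDegree
          = (g + h).totalDegree} =>
          MvPolynomial.homogeneousComponent 1 (Sum.elim ag ah (e.symm i.1)))
        = (fun j : {j : Fin r // (ag j).totalDegree = 1 ∧
            (ag j * bg j).totalDegree = g.totalDegree} =>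
            MvPolynomial.homogeneousComponent 1 (ag j.1)) ∘ φ := by
      funext i
      simp only [Function.comp_apply, hφ i, Sum.elim_inl]
    rw [heq]
    exact hgli.comp φ hinj

theorem stmt5 {F : Type*} [Field F] {n : ℕ} (g h : MvPolynomial (Fin n) F)
    (hdeg : g.totalDegree ≠ h.totalDegree) :
    rkStar (g + h) ≤ rkStar g + rkStar h := by
  rcases eq_or_ne (rkStar g) ⊤ with hgt | hgt
  · rw [hgt, top_add]; exact le_top
  rcases eq_or_ne (rkStar h) ⊤ with hht | hht
  · rw [hht, add_top]; exact le_top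
  obtain ⟨r, hr, hgd⟩ := rkStar_exists_min hgt
  obtain ⟨s, hs, hhd⟩ := rkStar_exists_min hht
  have hsum : HasRkStarDecomp (g + h) (r + s) := by
    rcases hdeg.lt_or_gt with hlt | hlt
    · have := hasRkStarDecomp_add hlt hhd hgd
      rw [add_comm h g, Nat.add_comm s r] at this
      exact this
    · exact hasRkStarDecomp_add hlt hgd hhd
  have : rkStar (g + h) ≤ ((r + s : ℕ) : ℕ∞) := sInf_le ⟨r + s, rfl, hsum⟩
  rw [hr, hs]
  exact this.trans_eq (by push_cast; rfl)
end

section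
/- (Lower-degree correlation) Let F be a finite field with q elements, and let f : F^n → F be a polynomial map of degree k ≥ 3 with rk*(f) = r finite. Then there exists a polynomial map P : F^n → F of degree at most k − 2 such that bias(f − P) ≥ q^{−2r}; that is, cor_{<k−1}(f) ≥ q^{−2·rk*(f)}. -/
open MvPolynomial

set_option linter.unusedSectionVars false

section CharSums

variable {F : Type*} [Field F] [Fintype F] [DecidableEq F]

private lemma addChar_map_sum {A M : Type*} [AddCommMonoid A] [CommMonoid M] (χ : AddChar A M)
    {ι : Type*} (s : Finset ι) (g : ι → A) : χ (∑ i ∈ s, g i) = ∏ i ∈ s, χ (g i) := by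
  classical
  induction s using Finset.cons_induction with
  | empty => simp
  | cons i s hi ih => rw [Finset.sum_cons, Finset.prod_cons, AddChar.map_add_eq_mul, ih]

private lemma sum_char_all (χ : AddChar F ℂ) (hχ : χ ≠ 1) : ∑ t : F, χ t = 0 :=
  AddChar.sum_eq_zero_iff_ne_zero.2 (by rwa [← AddChar.one_eq_zero])

private lemma sum_char_mul (χ : AddChar F ℂ) (hχ : χ ≠ 1) (c : F) :
    ∑ t : F, χ (c * t) = if c = 0 then (Fintype.card F : ℂ) else 0 := by
  split_ifs with h
  · simp [h, Finset.card_univ]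
  · have h1 : AddChar.mulShift χ c ≠ 1 := AddChar.IsPrimitive.of_ne_one hχ h
    have h2 : ∑ t : F, AddChar.mulShift χ c t = 0 :=
      AddChar.sum_eq_zero_iff_ne_zero.2 (by rwa [← AddChar.one_eq_zero])
    simpa [AddChar.mulShift_apply] using h2

private lemma sum_char_affine (χ : AddChar F ℂ) (hχ : χ ≠ 1) (A B : F) :
    ∑ t : F, χ (A * B - t * A) = if A = 0 then (Fintype.card F : ℂ) else 0 := by
  split_ifs with h
  · simp [h, Finset.card_univ]
  · have : ∑ t : F, χ (A * B - t * A) = ∑ y : F, χ y :=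
      Fintype.sum_equiv ((Equiv.mulRight₀ A h).trans (Equiv.subLeft (A * B))) _ _
        (fun t => rfl)
    rw [this, sum_char_all χ hχ]

private lemma sum_char_pair (χ : AddChar F ℂ) (hχ : χ ≠ 1) (A B : F) :
    ∑ p : F × F, χ ((A - p.1) * (B - p.2)) = (Fintype.card F : ℂ) := by
  rw [Fintype.sum_prod_type]
  have inner : ∀ u : F, ∑ v : F, χ ((A - u) * (B - v)) =
      if A - u = 0 then (Fintype.card F : ℂ) else 0 := by
    intro u
    rw [← sum_char_mul χ hχ (A - u)]
    exact Fintype.sum_equiv (Equiv.subLeft B) _ _ (fun v => rfl)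
  simp_rw [inner, sub_eq_zero]
  simp

private lemma sum_char_first (χ : AddChar F ℂ) (hχ : χ ≠ 1) (A B : F) :
    ∑ p : F × F, χ (A * B - p.1 * A) = if A = 0 then ((Fintype.card F : ℂ))^2 else 0 := by
  calc ∑ p : F × F, χ (A * B - p.1 * A)
      = ∑ u : F, ∑ _v : F, χ (A * B - u * A) := by rw [Fintype.sum_prod_type]
    _ = ∑ u : F, (Fintype.card F : ℂ) * χ (A * B - u * A) := by
        simp [Finset.card_univ, nsmul_eq_mul]
    _ = (Fintype.card F : ℂ) * ∑ u : F, χ (A * B - u * A) := by rw [Finset.mul_sum]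
    _ = _ := by rw [sum_char_affine χ hχ]; split_ifs <;> ring

end CharSums


set_option linter.unusedSectionVars false

section PolyAux

variable {F : Type*} [Field F]

private lemma degree_sum_eq {σ : Type*} (d : σ →₀ ℕ) : (d.sum fun _ e => e) = d.degree := rfl

private lemma exists_degree_eq_totalDegree {σ : Type*} {p : MvPolynomial σ F} (hp : p ≠ 0) :
    ∃ d ∈ p.support, d.degree = p.totalDegree := by
  have hne : p.support.Nonempty := by rwa [Finset.nonempty_iff_ne_empty, Ne, MvPolynomial.support_eq_empty]
  obtain ⟨d, hd, h⟩ := Finset.exists_mem_eq_sup p.support hne (fun d => d.sum fun _ e => e)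
  exact ⟨d, hd, by rw [← degree_sum_eq, ← h]; rfl⟩

private lemma hc_ne_zero {σ : Type*} {p : MvPolynomial σ F} (hp : p ≠ 0) :
    homogeneousComponent p.totalDegree p ≠ 0 := by
  obtain ⟨d, hd, hdeg⟩ := exists_degree_eq_totalDegree hp
  intro h0
  have := coeff_homogeneousComponent (R := F) p.totalDegree p d
  rw [h0, coeff_zero, if_pos hdeg] at this
  exact (mem_support_iff.1 hd) this.symm

private lemma degree_of_isHomogeneous {σ : Type*} {p : MvPolynomial σ F} {m : ℕ}
    (hp : p.IsHomogeneous m) {d : σ →₀ ℕ} (hd : coeff d p ≠ 0) : d.degree = m := by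
  rw [Finsupp.degree_eq_weight_one]; exact hp hd

private lemma totalDegree_mul_eq {σ : Type*} {p q : MvPolynomial σ F} (hp : p ≠ 0) (hq : q ≠ 0) :
    (p * q).totalDegree = p.totalDegree + q.totalDegree := by
  classical
  refine le_antisymm (totalDegree_mul p q) ?_
  set dp := p.totalDegree
  set dq := q.totalDegree
  have hkey : homogeneousComponent dp p * homogeneousComponent dq q ≠ 0 :=
    mul_ne_zero (hc_ne_zero hp) (hc_ne_zero hq)
  obtain ⟨m, hm⟩ : ∃ m, coeff m (homogeneousComponent dp p * homogeneousComponent dq q) ≠ 0 := by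
    by_contra h
    push_neg at h
    exact hkey (MvPolynomial.ext _ _ (fun m => by rw [h m, coeff_zero]))
  have hmdeg : m.degree = dp + dq :=
    degree_of_isHomogeneous
      ((homogeneousComponent_isHomogeneous dp p).mul (homogeneousComponent_isHomogeneous dq q)) hm
  have hco : coeff m (p * q) = coeff m (homogeneousComponent dp p * homogeneousComponent dq q) := by
    rw [coeff_mul, coeff_mul]
    refine Finset.sum_congr rfl fun uv huv => ?_
    rw [Finset.HasAntidiagonal.mem_antidiagonal] at huv
    have hdeg_add : uv.1.degree + uv.2.degree = dp + dq := by
      have hadd : (uv.1 + uv.2).degree = uv.1.degree + uv.2.degree := by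
        simp only [Finsupp.degree_eq_weight_one]; exact map_add _ _ _
      rw [← hadd, huv, hmdeg]
    rw [coeff_homogeneousComponent, coeff_homogeneousComponent]
    by_cases h1 : uv.1.degree = dp
    · rw [if_pos h1, if_pos (by omega)]
    · have h2 : uv.2.degree ≠ dq := fun h => h1 (by omega)
      rw [if_neg h1, if_neg h2, mul_zero]
      by_cases h3 : uv.1.degree ≤ dp
      · have : dq < uv.2.degree := by omega
        have : coeff uv.2 q = 0 :=
          coeff_eq_zero_of_totalDegree_lt (by rw [show (∑ i ∈ uv.2.support, uv.2 i) = uv.2.degree from rfl]; omega)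
        rw [this, mul_zero]
      · have : coeff uv.1 p = 0 :=
          coeff_eq_zero_of_totalDegree_lt (by rw [show (∑ i ∈ uv.1.support, uv.1 i) = uv.1.degree from rfl]; omega)
        rw [this, zero_mul]
  have hmem : m ∈ (p * q).support := mem_support_iff.2 (by rw [hco]; exact hm)
  have := le_totalDegree hmem
  rwa [degree_sum_eq, hmdeg] at this

private lemma eq_single_of_degree_one {σ : Type*} {m : σ →₀ ℕ} (hm : m.degree = 1) :
    ∃ j, m = Finsupp.single j 1 := by
  classical
  have hsupp : m.support.Nonempty := by
    rcases Finset.eq_empty_or_nonempty m.support with h | h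
    · exfalso
      have : m.degree = 0 := by show (∑ i ∈ m.support, m i) = 0; rw [h, Finset.sum_empty]
      omega
    · exact h
  obtain ⟨j, hj⟩ := hsupp
  have hcard : m.support.card ≤ 1 := by
    have h1 := Finset.card_nsmul_le_sum m.support m 1
      (fun x hx => Nat.one_le_iff_ne_zero.2 (Finsupp.mem_support_iff.1 hx))
    simp only [smul_eq_mul, mul_one] at h1
    have hdeg1 : (∑ i ∈ m.support, m i) = 1 := hm
    rw [hdeg1] at h1
    omega
  have hsupp_eq : m.support = {j} :=
    Finset.eq_singleton_iff_unique_mem.2 ⟨hj, fun x hx => Finset.card_le_one.1 hcard x hx j hj⟩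
  have hmj : m j = 1 := by
    have : m.degree = m j := by show (∑ i ∈ m.support, m i) = m j; rw [hsupp_eq, Finset.sum_singleton]
    omega
  exact ⟨j, Finsupp.eq_single_iff.2 ⟨by rw [hsupp_eq], hmj⟩⟩

private lemma eval_isHomogeneous_one {n : ℕ} {l : MvPolynomial (Fin n) F}
    (hl : l.IsHomogeneous 1) (x : Fin n → F) :
    eval x l = ∑ j, coeff (Finsupp.single j 1) l * x j := by
  classical
  rw [eval_eq]
  have key : ∀ j : Fin n,
      (∏ i ∈ (Finsupp.single j 1).support, x i ^ (Finsupp.single j 1) i) = x j := by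
    intro j
    rw [Finsupp.support_single_ne_zero _ one_ne_zero, Finset.prod_singleton,
      Finsupp.single_eq_same, pow_one]
  have hsub : l.support ⊆ Finset.univ.image (fun j : Fin n => Finsupp.single j 1) := by
    intro d hd
    have hdeg : d.degree = 1 := degree_of_isHomogeneous hl (mem_support_iff.1 hd)
    obtain ⟨j, rfl⟩ := eq_single_of_degree_one hdeg
    exact Finset.mem_image.2 ⟨j, Finset.mem_univ j, rfl⟩
  rw [Finset.sum_subset hsub (fun d _ hd => by rw [notMem_support_iff.1 hd, zero_mul]),
    Finset.sum_image (fun i _ j _ h => Finsupp.single_left_injective one_ne_zero h)]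
  exact Finset.sum_congr rfl fun j _ => by rw [key]

private lemma eq_C_add_hc_one {σ : Type*} {p : MvPolynomial σ F}
    (hp : p.totalDegree ≤ 1) :
    p = C (coeff 0 p) + homogeneousComponent 1 p := by
  classical
  apply MvPolynomial.ext
  intro d
  rw [coeff_add, coeff_homogeneousComponent, coeff_C]
  by_cases h0 : d = 0
  · subst h0
    rw [if_pos rfl, if_neg (by simp [map_zero]), add_zero]
  · rw [if_neg (fun h => h0 h.symm), zero_add]
    by_cases h1 : d.degree = 1
    · rw [if_pos h1]
    · rw [if_neg h1]
      have hd0 : d.degree ≠ 0 := fun h => h0 ((Finsupp.degree_eq_zero_iff d).1 h)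
      exact coeff_eq_zero_of_totalDegree_lt (f := p) (by
        rw [show (∑ i ∈ d.support, d i) = d.degree from rfl]; omega)

private lemma sum_char_linear {F : Type*} [Field F] [Fintype F] {n : ℕ}
    (χ : AddChar F ℂ) (hχ : χ ≠ 1)
    {l : MvPolynomial (Fin n) F} (hl : l.IsHomogeneous 1) (hne : l ≠ 0) :
    ∑ x : Fin n → F, χ (eval x l) = 0 := by
  classical
  obtain ⟨j, hj⟩ : ∃ j, coeff (Finsupp.single j 1) l ≠ 0 := by
    by_contra h
    push_neg at h
    apply hne
    apply MvPolynomial.ext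
    intro d
    rw [coeff_zero]
    by_contra hd
    have hdeg : d.degree = 1 := degree_of_isHomogeneous hl hd
    obtain ⟨j0, rfl⟩ := eq_single_of_degree_one hdeg
    exact hd (h j0)
  have hrw : ∀ x : Fin n → F,
      χ (eval x l) = ∏ i, χ (coeff (Finsupp.single i 1) l * x i) := by
    intro x
    rw [eval_isHomogeneous_one hl, addChar_map_sum]
  have hfac := Finset.prod_univ_sum (fun _ : Fin n => (Finset.univ : Finset F))
    (fun i y => χ (coeff (Finsupp.single i 1) l * y))
  rw [Fintype.piFinset_univ] at hfac
  rw [Finset.sum_congr rfl (fun x _ => hrw x), ← hfac]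
  exact Finset.prod_eq_zero (Finset.mem_univ j)
    (by rw [sum_char_mul χ hχ _, if_neg hj])

end PolyAux

theorem stmt9 {F : Type*} [Field F] [Fintype F] {n : ℕ} (χ : AddChar F ℂ) (hχ : χ ≠ 1)
    (k r : ℕ) (hk : 3 ≤ k) (f : MvPolynomial (Fin n) F)
    (hdeg : f.totalDegree = k) (hr : rkStar f = (r : ℕ∞)) :
    ∃ P : MvPolynomial (Fin n) F, P.totalDegree ≤ k - 2 ∧
      ((Fintype.card F : ℝ) ^ (2 * r))⁻¹ ≤ bias χ (fun x => eval x (f - P)) := by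
  classical
  -- Step 0: extract a decomposition of length exactly `r`.
  have hdecomp : HasRkStarDecomp f r := by
    have hne : {m : ℕ | HasRkStarDecomp f m}.Nonempty := by
      by_contra h
      rw [Set.not_nonempty_iff_eq_empty] at h
      have hempty : {N : ℕ∞ | ∃ m : ℕ, N = m ∧ HasRkStarDecomp f m} = ∅ := by
        ext N
        simp only [Set.mem_setOf_eq, Set.mem_empty_iff_false, iff_false, not_exists]
        rintro m ⟨rfl, hm⟩
        exact (Set.eq_empty_iff_forall_notMem.1 h) m hm
      rw [rkStar, hempty, sInf_empty] at hr
      exact (ENat.coe_ne_top r) hr.symm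
    have hmem : HasRkStarDecomp f (sInf {m : ℕ | HasRkStarDecomp f m}) := Nat.sInf_mem hne
    have heq : rkStar f = ((sInf {m : ℕ | HasRkStarDecomp f m} : ℕ) : ℕ∞) := by
      rw [rkStar]
      apply le_antisymm
      · exact sInf_le ⟨_, rfl, hmem⟩
      · apply le_sInf
        rintro N ⟨m, rfl, hm⟩
        exact_mod_cast Nat.sInf_le hm
    rw [hr] at heq
    have : r = sInf {m : ℕ | HasRkStarDecomp f m} := by exact_mod_cast heq
    rwa [this]
  obtain ⟨a, b, hsum, hdegA1, hAB, hABtop, hlin⟩ := hdecomp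
  set q : ℕ := Fintype.card F with hq
  have hq1 : 1 < q := Fintype.one_lt_card
  have hq0 : (0:ℝ) < (q:ℝ) := by positivity
  have hq0C : (q:ℂ) ≠ 0 := Nat.cast_ne_zero.2 (by omega)
  -- the special set of indices
  set S : Finset (Fin r) := Finset.univ.filter
      (fun i => (a i).totalDegree = 1 ∧ (a i * b i).totalDegree = f.totalDegree) with hS
  set s : ℕ := S.card with hscard
  have hsr : s ≤ r := by
    have := Finset.card_le_univ S
    simpa using this
  -- basic degree facts
  have ha0 : ∀ i, a i ≠ 0 := by
    intro i h
    have := hdegA1 i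
    rw [h, totalDegree_zero] at this
    omega
  have hb0 : ∀ i, b i ≠ 0 := by
    intro i h
    have h2 := hAB i
    have h3 := hdegA1 i
    rw [h, totalDegree_zero] at h2
    omega
  have hmul : ∀ i, (a i * b i).totalDegree = (a i).totalDegree + (b i).totalDegree :=
    fun i => totalDegree_mul_eq (ha0 i) (hb0 i)
  have haK : ∀ i, (a i).totalDegree ≤ k - 2 := by
    intro i
    have h1 := hdegA1 i
    have h2 := hAB i
    have h3 := hABtop i
    rw [hmul i, hdeg] at h3
    omega
  have hbK : ∀ i, i ∉ S → (b i).totalDegree ≤ k - 2 := by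
    intro i hi
    have h1 := hdegA1 i
    have h2 := hAB i
    have h3 := hABtop i
    rw [hmul i, hdeg] at h3
    rw [hS, Finset.mem_filter] at hi
    push_neg at hi
    have hi' := hi (Finset.mem_univ i)
    by_cases hA1 : (a i).totalDegree = 1
    · have hne : (a i * b i).totalDegree ≠ f.totalDegree := fun h => hi' hA1 h
      rw [hmul i, hdeg] at hne
      omega
    · omega
  -- the shifted polynomials
  set Q : Fin r → F × F → MvPolynomial (Fin n) F := fun i p =>
    if i ∈ S then C p.1 * a i else (C p.1 * b i + C p.2 * a i - C (p.1 * p.2)) with hQdef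
  set P : (Fin r → F × F) → MvPolynomial (Fin n) F := fun g => ∑ i, Q i (g i) with hPdef
  have hPdeg : ∀ g, (P g).totalDegree ≤ k - 2 := by
    intro g
    refine (totalDegree_finset_sum _ _).trans (Finset.sup_le fun i _ => ?_)
    by_cases hi : i ∈ S
    · simp only [hQdef, if_pos hi]
      refine (totalDegree_mul _ _).trans ?_
      rw [totalDegree_C, zero_add]
      exact haK i
    · simp only [hQdef, if_neg hi]
      refine (totalDegree_sub _ _).trans (max_le ((totalDegree_add _ _).trans (max_le ?_ ?_)) ?_)
      · exact (totalDegree_mul _ _).trans (by rw [totalDegree_C, zero_add]; exact hbK i hi)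
      · exact (totalDegree_mul _ _).trans (by rw [totalDegree_C, zero_add]; exact haK i)
      · rw [totalDegree_C]; omega
  -- evaluations
  set A : Fin r → (Fin n → F) → F := fun i x => eval x (a i) with hAdef
  -- the per-index character sums
  have hinner : ∀ (i : Fin r) (x : Fin n → F),
      ∑ p : F × F, χ (eval x (a i * b i - Q i p)) =
        if i ∈ S then (if A i x = 0 then (q:ℂ)^2 else 0) else (q:ℂ) := by
    intro i x
    by_cases hi : i ∈ S
    · rw [if_pos hi]
      have hev : ∀ p : F × F, eval x (a i * b i - Q i p)
          = A i x * eval x (b i) - p.1 * A i x := by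
        intro p
        simp only [hQdef, if_pos hi, hAdef, map_sub, map_mul, eval_C]
      simp_rw [hev]
      exact sum_char_first χ hχ _ _
    · rw [if_neg hi]
      have hev : ∀ p : F × F, eval x (a i * b i - Q i p)
          = (A i x - p.1) * (eval x (b i) - p.2) := by
        intro p
        simp only [hQdef, if_neg hi, hAdef, map_sub, map_add, map_mul, eval_C]
        ring
      simp_rw [hev]
      exact sum_char_pair χ hχ _ _
  -- linear independence over the subtype of S
  have hSlin : LinearIndependent F
      (fun i : {i // i ∈ S} => homogeneousComponent 1 (a i.1)) := by
    have hinj : Function.Injective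
        (fun i : {i // i ∈ S} =>
          (⟨i.1, (Finset.mem_filter.1 i.2).2⟩ :
            {i : Fin r // (a i).totalDegree = 1 ∧ (a i * b i).totalDegree = f.totalDegree})) := by
      intro i j h
      have h2 := congrArg Subtype.val h
      simp only at h2
      exact Subtype.ext h2
    exact hlin.comp
      (fun i : {i // i ∈ S} =>
        (⟨i.1, (Finset.mem_filter.1 i.2).2⟩ :
          {i : Fin r // (a i).totalDegree = 1 ∧ (a i * b i).totalDegree = f.totalDegree}))
      hinj
  -- the counting identity
  have hcount : (∑ x : Fin n → F, if (∀ i ∈ S, A i x = 0) then (1:ℂ) else 0) * (q:ℂ)^s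
      = (q:ℂ)^n := by
    have step1 : ∀ x : Fin n → F,
        (if (∀ i ∈ S, A i x = 0) then (1:ℂ) else 0) * (q:ℂ)^s =
          ∏ i : {i // i ∈ S}, ∑ t : F, χ (A i.1 x * t) := by
      intro x
      rw [Finset.prod_congr rfl (fun (i : {i // i ∈ S}) _ => sum_char_mul χ hχ (A i.1 x))]
      by_cases h : ∀ i ∈ S, A i x = 0
      · rw [if_pos h, one_mul,
          Finset.prod_congr rfl (fun (i : {i // i ∈ S}) _ => if_pos (h i.1 i.2)),
          Finset.prod_const]
        congr 1
        rw [Finset.card_univ, Fintype.card_coe]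
      · rw [if_neg h, zero_mul]
        push_neg at h
        obtain ⟨i, hiS, hi⟩ := h
        exact (Finset.prod_eq_zero
          (f := fun i : {i // i ∈ S} => if A i.1 x = 0 then (q:ℂ) else 0)
          (Finset.mem_univ (⟨i, hiS⟩ : {i // i ∈ S})) (if_neg hi)).symm
    have hpt : ∀ t : {i // i ∈ S} → F,
        (∑ x : Fin n → F, χ (eval x (∑ i : {i // i ∈ S}, C (t i) * a i.1)))
          = if t = 0 then (q:ℂ)^n else 0 := by
      intro t
      by_cases ht : t = 0
      · subst ht
        rw [if_pos rfl]
        have hzero : (∑ i : {i // i ∈ S}, C ((0 : {i // i ∈ S} → F) i) * a i.1)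
            = (0 : MvPolynomial (Fin n) F) := by
          simp
        rw [hzero]
        simp only [map_zero, AddChar.map_zero_eq_one]
        rw [Finset.sum_const, Finset.card_univ, Fintype.card_fun, Fintype.card_fin]
        simp [hq]
      · rw [if_neg ht]
        set p : MvPolynomial (Fin n) F := ∑ i : {i // i ∈ S}, C (t i) * a i.1 with hpdef
        have hdegS : ∀ i : {i // i ∈ S}, (a i.1).totalDegree = 1 :=
          fun i => (Finset.mem_filter.1 i.2).2.1
        have hpdeg : p.totalDegree ≤ 1 := by
          refine (totalDegree_finset_sum _ _).trans (Finset.sup_le fun i _ => ?_)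
          exact (totalDegree_mul _ _).trans
            (by rw [totalDegree_C, zero_add, hdegS i])
        have hlrep : homogeneousComponent 1 p
            = ∑ i : {i // i ∈ S}, t i • homogeneousComponent 1 (a i.1) := by
          rw [hpdef, map_sum]
          refine Finset.sum_congr rfl fun i _ => ?_
          rw [homogeneousComponent_C_mul, C_mul']
        have hlne : homogeneousComponent 1 p ≠ 0 := by
          intro h0
          rw [hlrep] at h0
          have hz := Fintype.linearIndependent_iff.1 hSlin t h0
          exact ht (funext hz)
        have hrep := eq_C_add_hc_one hpdeg
        calc ∑ x : Fin n → F, χ (eval x p)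
            = ∑ x : Fin n → F, χ (coeff 0 p) * χ (eval x (homogeneousComponent 1 p)) := by
              refine Finset.sum_congr rfl fun x _ => ?_
              conv_lhs => rw [hrep]
              rw [map_add, eval_C, AddChar.map_add_eq_mul]
          _ = χ (coeff 0 p) * ∑ x : Fin n → F, χ (eval x (homogeneousComponent 1 p)) := by
              rw [Finset.mul_sum]
          _ = 0 := by
              rw [sum_char_linear χ hχ (homogeneousComponent_isHomogeneous 1 p) hlne,
                mul_zero]
    calc (∑ x : Fin n → F, if (∀ i ∈ S, A i x = 0) then (1:ℂ) else 0) * (q:ℂ)^s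
        = ∑ x : Fin n → F, ∏ i : {i // i ∈ S}, ∑ t : F, χ (A i.1 x * t) := by
          rw [Finset.sum_mul]
          exact Finset.sum_congr rfl fun x _ => step1 x
      _ = ∑ x : Fin n → F, ∑ t : {i // i ∈ S} → F, ∏ i : {i // i ∈ S}, χ (A i.1 x * t i) := by
          refine Finset.sum_congr rfl fun x _ => ?_
          rw [Finset.prod_univ_sum, Fintype.piFinset_univ]
      _ = ∑ t : {i // i ∈ S} → F, ∑ x : Fin n → F,
            χ (eval x (∑ i : {i // i ∈ S}, C (t i) * a i.1)) := by
          rw [Finset.sum_comm]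
          refine Finset.sum_congr rfl fun t _ => Finset.sum_congr rfl fun x _ => ?_
          rw [map_sum, addChar_map_sum]
          exact Finset.prod_congr rfl fun i _ => congrArg χ (by
            rw [map_mul, eval_C]
            exact mul_comm _ _)
      _ = ∑ t : {i // i ∈ S} → F, if t = 0 then (q:ℂ)^n else 0 :=
          Finset.sum_congr rfl fun t _ => hpt t
      _ = (q:ℂ)^n := by
          rw [Finset.sum_ite_eq' Finset.univ (0 : {i // i ∈ S} → F) (fun _ => (q:ℂ)^n)]
          simp
  -- total sum identity
  have htotal : (∑ g : Fin r → F × F, ∑ x : Fin n → F, χ (eval x (f - P g)))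
      = (q:ℂ)^(n + r) := by
    have hterm : ∀ (g : Fin r → F × F) (x : Fin n → F), χ (eval x (f - P g)) =
        ∏ i, χ (eval x (a i * b i - Q i (g i))) := by
      intro g x
      have hfp : f - P g = ∑ i, (a i * b i - Q i (g i)) := by
        rw [Finset.sum_sub_distrib, ← hsum]
      rw [hfp, map_sum, addChar_map_sum]
    calc ∑ g : Fin r → F × F, ∑ x : Fin n → F, χ (eval x (f - P g))
        = ∑ x : Fin n → F, ∑ g : Fin r → F × F,
            ∏ i, χ (eval x (a i * b i - Q i (g i))) := by
          rw [Finset.sum_comm]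
          exact Finset.sum_congr rfl fun x _ => Finset.sum_congr rfl fun g _ => hterm g x
      _ = ∑ x : Fin n → F, ∏ i, ∑ p : F × F, χ (eval x (a i * b i - Q i p)) := by
          refine Finset.sum_congr rfl fun x _ => ?_
          rw [Finset.prod_univ_sum, Fintype.piFinset_univ]
      _ = ∑ x : Fin n → F,
            ((if (∀ i ∈ S, A i x = 0) then (1:ℂ) else 0) * ((q:ℂ)^(2*s) * (q:ℂ)^(r-s))) := by
          refine Finset.sum_congr rfl fun x _ => ?_
          rw [Finset.prod_congr rfl (fun i _ => hinner i x)]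
          rw [← Finset.prod_mul_prod_compl S]
          have h1 : (∏ i ∈ S, if i ∈ S then (if A i x = 0 then (q:ℂ)^2 else 0) else (q:ℂ))
              = if (∀ i ∈ S, A i x = 0) then ((q:ℂ))^(2*s) else 0 := by
            rw [Finset.prod_congr rfl (fun i hi => if_pos hi)]
            by_cases h : ∀ i ∈ S, A i x = 0
            · rw [if_pos h, Finset.prod_congr rfl (fun i hi => if_pos (h i hi)),
                Finset.prod_const, ← pow_mul]
            · rw [if_neg h]
              push_neg at h
              obtain ⟨i, hiS, hi⟩ := h
              exact Finset.prod_eq_zero hiS (if_neg hi)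
          have h2 : (∏ i ∈ Sᶜ, if i ∈ S then (if A i x = 0 then (q:ℂ)^2 else 0) else (q:ℂ))
              = (q:ℂ)^(r-s) := by
            rw [Finset.prod_congr rfl (fun i hi => if_neg (Finset.mem_compl.1 hi)),
              Finset.prod_const]
            congr 1
            rw [Finset.card_compl, Fintype.card_fin]
          rw [h1, h2]
          by_cases h : ∀ i ∈ S, A i x = 0
          · rw [if_pos h, if_pos h, one_mul]
          · rw [if_neg h, if_neg h, zero_mul, zero_mul]
      _ = (∑ x : Fin n → F, if (∀ i ∈ S, A i x = 0) then (1:ℂ) else 0)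
            * ((q:ℂ)^(2*s) * (q:ℂ)^(r-s)) := by
          rw [← Finset.sum_mul]
      _ = (q:ℂ)^(n+r) := by
          have hpow : (q:ℂ)^(2*s) * (q:ℂ)^(r-s) = (q:ℂ)^(r+s) := by
            rw [← pow_add]
            congr 1
            omega
          rw [hpow]
          have h3 : (∑ x : Fin n → F, if (∀ i ∈ S, A i x = 0) then (1:ℂ) else 0)
              * (q:ℂ)^(r+s) * (q:ℂ)^s = (q:ℂ)^(n+r) * (q:ℂ)^s := by
            calc (∑ x : Fin n → F, if (∀ i ∈ S, A i x = 0) then (1:ℂ) else 0)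
                  * (q:ℂ)^(r+s) * (q:ℂ)^s
                = ((∑ x : Fin n → F, if (∀ i ∈ S, A i x = 0) then (1:ℂ) else 0)
                  * (q:ℂ)^s) * (q:ℂ)^(r+s) := by ring
              _ = (q:ℂ)^n * (q:ℂ)^(r+s) := by rw [hcount]
              _ = (q:ℂ)^(n+r) * (q:ℂ)^s := by
                  rw [← pow_add, ← pow_add]
                  congr 1
                  omega
          exact mul_right_cancel₀ (pow_ne_zero _ hq0C) h3
  -- pigeonhole
  have habs : ((q:ℝ))^(n+r) ≤
      ∑ g : Fin r → F × F, ‖(∑ x : Fin n → F, χ (eval x (f - P g)))‖ := by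
    calc ((q:ℝ))^(n+r) = ‖((q:ℂ)^(n+r))‖ := by
          rw [norm_pow, Complex.norm_natCast]
      _ = ‖(∑ g : Fin r → F × F, ∑ x : Fin n → F, χ (eval x (f - P g)))‖ := by
          rw [htotal]
      _ ≤ _ := norm_sum_le _ _
  obtain ⟨g, hg⟩ : ∃ g : Fin r → F × F,
      (q:ℝ)^(n+r) ≤ (q:ℝ)^(2*r) * ‖(∑ x : Fin n → F, χ (eval x (f - P g)))‖ := by
    by_contra h
    push_neg at h
    have hcard : (Fintype.card (Fin r → F × F) : ℝ) = (q:ℝ)^(2*r) := by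
      rw [Fintype.card_fun, Fintype.card_prod, Fintype.card_fin]
      push_cast
      rw [two_mul, pow_add]
      ring
    have h1 : ∑ g : Fin r → F × F,
        (q:ℝ)^(2*r) * ‖(∑ x : Fin n → F, χ (eval x (f - P g)))‖
        < ∑ _g : Fin r → F × F, (q:ℝ)^(n+r) :=
      Finset.sum_lt_sum_of_nonempty Finset.univ_nonempty (fun g _ => h g)
    rw [← Finset.mul_sum, Finset.sum_const, Finset.card_univ, nsmul_eq_mul, hcard] at h1
    have h2 : (q:ℝ)^(2*r) * (q:ℝ)^(n+r) ≤
        (q:ℝ)^(2*r) * ∑ g : Fin r → F × F,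
          ‖(∑ x : Fin n → F, χ (eval x (f - P g)))‖ :=
      mul_le_mul_of_nonneg_left habs (by positivity)
    linarith
  refine ⟨P g, hPdeg g, ?_⟩
  rw [bias, cbias]
  rw [norm_mul, norm_inv, Complex.norm_natCast]
  have hcardV : (Fintype.card (Fin n → F) : ℝ) = (q:ℝ)^n := by
    rw [Fintype.card_fun, Fintype.card_fin]
    push_cast
    ring
  rw [hcardV]
  have hXn : (q:ℝ)^n ≤ (q:ℝ)^(2*r) *
      ‖(∑ x : Fin n → F, χ (eval x (f - P g)))‖ := by
    refine le_trans ?_ hg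
    exact pow_le_pow_right₀ (by exact_mod_cast hq1.le) (Nat.le_add_right n r)
  rw [inv_mul_eq_div, le_div_iff₀ (by positivity), inv_mul_le_iff₀ (by positivity)]
  exact hXn
end

section
/- (Iterated discrete derivative via semi-surjections) Let F be a field, let f : F^n → F be the monomial f(x) = ∏_{j=1}^k x_{i_j} for indices i_1, …, i_k ∈ {1,…,n}, and let d ≥ 0. Then for all x^(1), …, x^(d+1) ∈ F^n, Δ^d_{(x^(1),…,x^(d))} f(x^(d+1)) = Σ_φ ∏_{j=1}^k x^{(φ(j))}_{i_j}, where the sum ranges over all functions φ : {1,…,k} → {1,…,d+1} whose image contains {1,…,d}. -/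
open MvPolynomial

lemma lem1 {F V : Type*} [Field F] [AddCommGroup V] :
    ∀ (d : ℕ) (v : Fin d → V) (f : V → F) (w : V),
    iterDDeriv d v f w
      = ∑ ε : Fin d → Bool, (∏ t, if ε t then (1:F) else -1)
          * f (w + ∑ t, if ε t then v t else 0)
  | 0, v, f, w => by
      simp [iterDDeriv, Finset.sum_const]
  | (d+1), v, f, w => by
      rw [show iterDDeriv (d+1) v f
          = discDeriv (v (Fin.last d)) (iterDDeriv d (fun i => v i.castSucc) f) from rfl]
      simp only [discDeriv]
      rw [lem1 d, lem1 d]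
      rw [← Equiv.sum_comp (Fin.snocEquiv (fun _ => Bool))]
      rw [Fintype.sum_prod_type]
      simp only [Fin.snocEquiv, Equiv.coe_fn_mk]
      rw [Fintype.sum_bool]
      rw [← Finset.sum_add_distrib, ← Finset.sum_sub_distrib]
      apply Finset.sum_congr rfl
      intro ε _
      simp only [Fin.prod_univ_castSucc, Fin.sum_univ_castSucc, Fin.snoc_castSucc,
        Fin.snoc_last, if_true, if_false, mul_one, mul_neg, neg_mul, add_zero]
      rw [show w + v (Fin.last d) + (∑ t : Fin d, if ε t then v t.castSucc else 0)
          = w + ((∑ t : Fin d, if ε t then v t.castSucc else 0) + v (Fin.last d)) by abel]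
      simp only [Bool.false_eq_true, if_false, add_zero, mul_neg, mul_one, neg_mul]
      ring

lemma ind_prod {F : Type*} [Field F] {d : ℕ} (p : Fin d → Prop) [DecidablePred p] :
    (∏ t, if p t then (1:F) else 0) = if (∀ t, p t) then 1 else 0 := by
  by_cases h : ∀ t, p t
  · rw [if_pos h]; exact Finset.prod_eq_one (fun t _ => if_pos (h t))
  · rw [if_neg h]; push_neg at h; obtain ⟨t, ht⟩ := h
    exact Finset.prod_eq_zero (Finset.mem_univ t) (if_neg ht)

theorem stmt11 {F : Type*} [Field F] {n k d : ℕ} (idx : Fin k → Fin n)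
    (v : Fin d → (Fin n → F)) (w : Fin n → F) :
    iterDDeriv d v (fun x => ∏ j, x (idx j)) w
      = ∑ φ ∈ Finset.univ.filter
          (fun φ : Fin k → Fin (d + 1) => ∀ t : Fin d, ∃ j, φ j = t.castSucc),
          ∏ j, (Fin.snoc v w : Fin (d + 1) → Fin n → F) (φ j) (idx j) := by
  rw [lem1]
  have key : ∀ ε : Fin d → Bool,
      (∏ t, if ε t then (1:F) else -1) *
        (fun x => ∏ j, x (idx j)) (w + ∑ t, if ε t then v t else 0)
      = ∑ φ : Fin k → Fin (d+1), (∏ t, if ε t then (1:F) else -1) *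
          ∏ j, (Fin.snoc (fun t => if ε t then v t else 0) w :
            Fin (d + 1) → Fin n → F) (φ j) (idx j) := by
    intro ε
    rw [← Finset.mul_sum]
    congr 1
    show ∏ j, (w + ∑ t, if ε t then v t else 0) (idx j) = _
    have hpt : ∀ j : Fin k, (w + ∑ t, if ε t then v t else 0) (idx j)
        = ∑ t : Fin (d+1), (Fin.snoc (fun t => if ε t then v t else 0) w :
            Fin (d + 1) → Fin n → F) t (idx j) := by
      intro j
      rw [Fin.sum_univ_castSucc]
      simp [Finset.sum_apply, add_comm]
    rw [Finset.prod_congr rfl (fun j _ => hpt j)]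
    rw [Finset.prod_univ_sum]
    rw [Fintype.piFinset_univ]
  simp only [key]
  rw [Finset.sum_comm]
  rw [Finset.sum_filter]
  apply Finset.sum_congr rfl
  intro φ _
  have hX : ∀ ε : Fin d → Bool,
      (∏ j, (Fin.snoc (fun t => if ε t then v t else 0) w :
          Fin (d + 1) → Fin n → F) (φ j) (idx j))
      = (if (∀ t : Fin d, (∃ j, φ j = t.castSucc) → ε t = true) then (1:F) else 0) *
          ∏ j, (Fin.snoc v w : Fin (d + 1) → Fin n → F) (φ j) (idx j) := by
    intro ε
    by_cases h : ∀ t : Fin d, (∃ j, φ j = t.castSucc) → ε t = true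
    · rw [if_pos h, one_mul]
      refine Finset.prod_congr rfl (fun j _ => ?_)
      rcases Fin.eq_castSucc_or_eq_last (φ j) with ⟨t', ht'⟩ | hl
      · rw [ht', Fin.snoc_castSucc, Fin.snoc_castSucc, if_pos (h t' ⟨j, ht'⟩)]
      · rw [hl, Fin.snoc_last, Fin.snoc_last]
    · rw [if_neg h, zero_mul]
      push_neg at h
      obtain ⟨t, ⟨j, hj⟩, ht⟩ := h
      refine Finset.prod_eq_zero (Finset.mem_univ j) ?_
      rw [hj]
      simp [ht]
  simp only [hX]
  simp only [← mul_assoc, ← Finset.sum_mul]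
  have hind : ∀ ε : Fin d → Bool,
      (∏ t, if ε t then (1:F) else -1) *
        (if (∀ t : Fin d, (∃ j, φ j = t.castSucc) → ε t = true) then (1:F) else 0)
      = ∏ t : Fin d, ((if ε t then (1:F) else -1) *
          (if (∃ j, φ j = t.castSucc) → ε t = true then (1:F) else 0)) := by
    intro ε
    rw [Finset.prod_mul_distrib, ind_prod (fun t => (∃ j, φ j = t.castSucc) → ε t = true)]
  simp only [hind]
  have hswap : ∀ g : Fin d → Bool → F,
      (∑ ε : Fin d → Bool, ∏ t, g t (ε t)) = ∏ t, ∑ b, g t b := by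
    intro g
    rw [← Fintype.piFinset_univ]
    exact Finset.sum_prod_piFinset _ g
  rw [hswap (fun t b => (if b = true then (1:F) else -1) *
    if (∃ j, φ j = t.castSucc) → b = true then 1 else 0)]
  have hfac : ∀ t : Fin d,
      (∑ b : Bool, (if b then (1:F) else -1) *
        (if (∃ j, φ j = t.castSucc) → b = true then (1:F) else 0))
      = if (∃ j, φ j = t.castSucc) then 1 else 0 := by
    intro t
    rw [Fintype.sum_bool]
    by_cases h : ∃ j, φ j = t.castSucc
    · simp [h]
    · simp [h]
  simp only [hfac]
  rw [ind_prod (fun t => ∃ j, φ j = t.castSucc)]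
  split_ifs <;> simp
end

section
/- Let F be a field and let f : F^n → F be the monomial f(x) = ∏_{j=1}^k x_{i_j} for indices i_1, …, i_k ∈ {1,…,n}. Then for all x^(1), …, x^(k) ∈ F^n and every base point y ∈ F^n, Δ^k_{(x^(1),…,x^(k))} f(y) = Σ_{π ∈ S_k} ∏_{j=1}^k x^{(π(j))}_{i_j}, where S_k is the set of permutations of {1,…,k}; in particular the value is independent of y. -/
open MvPolynomial

open Finset in
lemma iter_ie {F V : Type*} [Field F] [AddCommGroup V] :
    ∀ (d : ℕ) (v : Fin d → V) (f : V → F) (y : V),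
    iterDDeriv d v f y
      = ∑ ε : Fin d → Bool, (∏ i, if ε i then (1:F) else -1) *
          f (y + ∑ i, if ε i then v i else 0)
  | 0, v, f, y => by simp [iterDDeriv]
  | d+1, v, f, y => by
    have h : iterDDeriv (d+1) v f y
        = iterDDeriv d (fun i => v i.castSucc) f (y + v (Fin.last d))
          - iterDDeriv d (fun i => v i.castSucc) f y := rfl
    rw [h, iter_ie d, iter_ie d, ← Equiv.sum_comp (Fin.snocEquiv (fun _ => Bool)),
      Fintype.sum_prod_type, Fintype.sum_bool]
    simp only [Fin.snocEquiv, Equiv.coe_fn_mk, Fin.snoc_castSucc, Fin.snoc_last,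
      Fin.prod_univ_castSucc, Fin.sum_univ_castSucc, if_true, if_false, mul_one, add_zero,
      mul_neg_one, neg_mul, Finset.sum_neg_distrib, sub_eq_add_neg]
    simp only [Bool.false_eq_true, if_false, mul_neg_one, add_zero, neg_mul,
      ← Finset.sum_neg_distrib]
    congr 1
    · refine Finset.sum_congr rfl fun ε _ => ?_
      congr 2
      abel

theorem stmt12 {F : Type*} [Field F] {n k : ℕ} (idx : Fin k → Fin n)
    (v : Fin k → (Fin n → F)) (y : Fin n → F) :
    iterDDeriv k v (fun x => ∏ j, x (idx j)) y
      = ∑ π : Equiv.Perm (Fin k), ∏ j, v (π j) (idx j) := by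
  classical
  rw [iter_ie]
  have hexp : ∀ ε : Fin k → Bool,
      (∏ j, (y + ∑ i, if ε i = true then v i else 0) (idx j))
        = ∑ p : Fin k → Option (Fin k), ∏ j,
            Option.elim (p j) (y (idx j)) (fun i => if ε i = true then v i (idx j) else 0) := by
    intro ε
    have h1 : ∀ j : Fin k, (y + ∑ i, if ε i = true then v i else 0) (idx j)
        = ∑ o : Option (Fin k),
            Option.elim o (y (idx j)) (fun i => if ε i = true then v i (idx j) else 0) := by
      intro j
      rw [univ_option, Finset.sum_insertNone]
      simp [Finset.sum_apply, apply_ite (fun g : Fin n → F => g (idx j))]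
    rw [Finset.prod_congr rfl (fun j _ => h1 j), Finset.prod_univ_sum, Fintype.piFinset_univ]
  simp only [hexp, Finset.mul_sum]
  rw [Finset.sum_comm]
  have key : ∀ p : Fin k → Option (Fin k),
      (∑ ε : Fin k → Bool, (∏ i, if ε i = true then (1:F) else -1) *
        ∏ j, Option.elim (p j) (y (idx j)) (fun i => if ε i = true then v i (idx j) else 0))
      = if (∀ i, ∃ j, p j = some i) then
          ∏ j, Option.elim (p j) (y (idx j)) (fun i => v i (idx j)) else 0 := by
    intro p
    have step1 : ∀ ε : Fin k → Bool,
        (∏ j, Option.elim (p j) (y (idx j)) (fun i => if ε i = true then v i (idx j) else 0))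
        = (∏ j, Option.elim (p j) (y (idx j)) (fun i => v i (idx j)))
          * ∏ j, Option.elim (p j) (1:F) (fun i => if ε i = true then 1 else 0) := by
      intro ε
      rw [← Finset.prod_mul_distrib]
      refine Finset.prod_congr rfl fun j _ => ?_
      cases hpj : p j with
      | none => simp
      | some i => by_cases h : ε i = true <;> simp [h]
    have step2 : ∀ ε : Fin k → Bool,
        (∏ i, if ε i = true then (1:F) else -1)
          * ∏ j, Option.elim (p j) (1:F) (fun i => if ε i = true then 1 else 0)
        = ∏ i, (if ε i = true then (1:F) else if (∃ j, p j = some i) then 0 else -1) := by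
      intro ε
      have hc : (∏ j, Option.elim (p j) (1:F) (fun i => if ε i = true then 1 else 0))
          = if (∀ j, ∀ i, p j = some i → ε i = true) then 1 else 0 := by
        rw [show (if (∀ j, ∀ i, p j = some i → ε i = true) then (1:F) else 0)
            = ∏ j, if (∀ i, p j = some i → ε i = true) then (1:F) else 0 by
          rw [Finset.prod_boole]; simp]
        refine Finset.prod_congr rfl fun j _ => ?_
        cases hpj : p j with
        | none => simp
        | some i => by_cases h : ε i = true <;> simp [h]
      rw [hc]
      by_cases hall : ∀ j, ∀ i, p j = some i → ε i = true
      · rw [if_pos hall, mul_one]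
        refine Finset.prod_congr rfl fun i _ => ?_
        by_cases h : ε i = true
        · simp [h]
        · have hne : ¬ ∃ j, p j = some i := by
            rintro ⟨j, hj⟩; exact h (hall j i hj)
          simp [h, hne]
      · rw [if_neg hall, mul_zero]
        push_neg at hall
        obtain ⟨j, i, hj, hi⟩ := hall
        refine (Finset.prod_eq_zero (Finset.mem_univ i) ?_).symm
        rw [if_neg hi, if_pos ⟨j, hj⟩]
    have hsum : (∑ ε : Fin k → Bool,
          ∏ i, (if ε i = true then (1:F) else if (∃ j, p j = some i) then 0 else -1))
        = if (∀ i, ∃ j, p j = some i) then 1 else 0 := by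
      have h2 := Finset.prod_univ_sum (fun _ : Fin k => (Finset.univ : Finset Bool))
        (fun i b => if b = true then (1:F) else if (∃ j, p j = some i) then 0 else -1)
      rw [Fintype.piFinset_univ] at h2
      refine Eq.trans h2.symm ?_
      rw [show (if (∀ i, ∃ j, p j = some i) then (1:F) else 0)
          = ∏ i, if (∃ j, p j = some i) then (1:F) else 0 by rw [Finset.prod_boole]; simp]
      refine Finset.prod_congr rfl fun i _ => ?_
      rw [Fintype.sum_bool]
      by_cases he : ∃ j, p j = some i <;> simp [he]
    calc (∑ ε : Fin k → Bool, (∏ i, if ε i = true then (1:F) else -1) *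
        ∏ j, Option.elim (p j) (y (idx j)) (fun i => if ε i = true then v i (idx j) else 0))
        = (∑ ε : Fin k → Bool,
            ∏ i, (if ε i = true then (1:F) else if (∃ j, p j = some i) then 0 else -1))
          * ∏ j, Option.elim (p j) (y (idx j)) (fun i => v i (idx j)) := by
          rw [Finset.sum_mul]
          refine Finset.sum_congr rfl fun ε _ => ?_
          rw [step1 ε, ← step2 ε]; ring
      _ = _ := by rw [hsum]; split <;> simp
  rw [Finset.sum_congr rfl fun p _ => key p, ← Finset.sum_filter]
  refine (Finset.sum_bij (fun (π : Equiv.Perm (Fin k)) _ => fun j => some (π j))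
    ?_ ?_ ?_ ?_).symm
  · intro π _
    simp only [Finset.mem_filter, Finset.mem_univ, true_and]
    exact fun i => ⟨π.symm i, by simp⟩
  · intro π _ π' _ h
    exact Equiv.ext fun j => by simpa using congrFun h j
  · intro p hp
    simp only [Finset.mem_filter, Finset.mem_univ, true_and] at hp
    choose u hu using hp
    have hinj : Function.Injective u := by
      intro a b hab
      have : some a = some b := by rw [← hu a, ← hu b, hab]
      exact Option.some_injective _ this
    have hbij := Finite.injective_iff_bijective.mp hinj
    refine ⟨(Equiv.ofBijective u hbij).symm, Finset.mem_univ _, ?_⟩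
    funext j
    have huj : u ((Equiv.ofBijective u hbij).symm j) = j :=
      (Equiv.ofBijective u hbij).apply_symm_apply j
    have h3 : p j = some ((Equiv.ofBijective u hbij).symm j) := by
      conv_lhs => rw [← huj]
      exact hu _
    exact h3.symm
  · intro π _
    simp
end

section
/- Let F be a field with char(F) ≠ 2, let d ≥ 1, and let g : F^n → F be a form of degree d+1 with polarization g̃ : (F^n)^{d+1} → F. Then for all v⃗ = (v^(1),…,v^(d)) ∈ (F^n)^d and x ∈ F^n, Δ^d_{v⃗} g(x) = g̃(v^(1),…,v^(d), x'), where x' = x + (1/2)·Σ_{t=1}^d v^(t). -/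
open MvPolynomial

set_option linter.unusedSectionVars false
set_option maxHeartbeats 1000000

namespace Stmt15Aux

section CommRing
variable {F : Type*} [CommRing F] [Nontrivial F] {n : ℕ}

/-- Polynomial discrete derivative. -/
noncomputable def pdd (w : Fin n → F) (q : MvPolynomial (Fin n) F) : MvPolynomial (Fin n) F :=
  bind₁ (fun i => X i + C (w i)) q - q

lemma eval_bind_shift (w z : Fin n → F) (q : MvPolynomial (Fin n) F) :
    eval z (bind₁ (fun i => X i + C (w i)) q) = eval (z + w) q := by
  have h := eval₂Hom_bind₁ (RingHom.id F) z (fun i => X i + C (w i)) q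
  have e1 : (fun i => eval₂Hom (RingHom.id F) z ((fun i => X i + C (w i)) i)) = z + w := by
    funext i; simp
  calc eval z (bind₁ (fun i => X i + C (w i)) q)
      = eval₂Hom (RingHom.id F) z (bind₁ (fun i => X i + C (w i)) q) := rfl
    _ = eval₂Hom (RingHom.id F) (fun i => eval₂Hom (RingHom.id F) z ((fun i => X i + C (w i)) i)) q := h
    _ = eval (z + w) q := by rw [e1]; rfl

lemma eval_pdd (w z : Fin n → F) (q : MvPolynomial (Fin n) F) :
    eval z (pdd w q) = eval (z + w) q - eval z q := by
  rw [pdd, map_sub, eval_bind_shift]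

lemma deg_binom (a : Fin n) (c : F) (b : ℕ) :
    ((X a + C c) ^ b - (X a : MvPolynomial (Fin n) F) ^ b).totalDegree ≤ b - 1 := by
  induction b with
  | zero => simp
  | succ b ih =>
    have key : (X a + C c) ^ (b + 1) - (X a : MvPolynomial (Fin n) F) ^ (b + 1)
        = C c * X a ^ b + (X a + C c) * ((X a + C c) ^ b - X a ^ b) := by ring
    rw [key]
    rcases Nat.eq_zero_or_pos b with hb | hb
    · subst hb; simpa using (totalDegree_C c).le
    · have hXC : (X a + C c : MvPolynomial (Fin n) F).totalDegree ≤ 1 :=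
        (totalDegree_add _ _).trans (by simp)
      have h1 : (C c * X a ^ b : MvPolynomial (Fin n) F).totalDegree ≤ b := by
        refine (totalDegree_mul _ _).trans ?_
        have := (totalDegree_pow (X a : MvPolynomial (Fin n) F) b)
        simp only [totalDegree_C, zero_add]
        exact this.trans (by simp)
      have h2 : ((X a + C c) * ((X a + C c) ^ b - X a ^ b) : MvPolynomial (Fin n) F).totalDegree ≤ b := by
        refine (totalDegree_mul _ _).trans ?_
        have := ih
        omega
      exact (totalDegree_add _ _).trans (by simp; omega)

/-- Difference of the shifted monomial and the monomial. -/
noncomputable def Dm (w : Fin n → F) (m : Fin n →₀ ℕ) : MvPolynomial (Fin n) F :=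
  bind₁ (fun i => X i + C (w i)) (monomial m 1) - monomial m 1

lemma Dm_zero (w : Fin n → F) : Dm w 0 = 0 := by
  simp [Dm, monomial_zero']

lemma degree_add' (f g : Fin n →₀ ℕ) : (f + g).degree = f.degree + g.degree := by
  simp [Finsupp.degree_eq_weight_one, map_add]

lemma degree_single' (a : Fin n) (b : ℕ) : (Finsupp.single a b).degree = b := by
  rcases Nat.eq_zero_or_pos b with hb | hb
  · subst hb; simp [Finsupp.degree]
  · exact Finsupp.degree_single a b

lemma deg_Dm (w : Fin n → F) (m : Fin n →₀ ℕ) :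
    (Dm w m).totalDegree ≤ m.degree - 1 := by
  induction m using Finsupp.induction with
  | zero => simp [Dm_zero]
  | single_add a b m ha hb ih =>
    have hmon : (monomial (Finsupp.single a b + m) (1 : F)) = X a ^ b * monomial m 1 := by
      rw [X_pow_eq_monomial, monomial_mul, one_mul]
    have hB : bind₁ (fun i => X i + C (w i)) (monomial (Finsupp.single a b + m) (1 : F))
        = (X a + C (w a)) ^ b * bind₁ (fun i => X i + C (w i)) (monomial m 1) := by
      rw [hmon, map_mul, map_pow, bind₁_X_right]
    have hBm : bind₁ (fun i => X i + C (w i)) (monomial m (1:F)) = monomial m 1 + Dm w m := by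
      rw [Dm]; ring
    have key : Dm w (Finsupp.single a b + m)
        = ((X a + C (w a)) ^ b - X a ^ b) * monomial m 1 + (X a + C (w a)) ^ b * Dm w m := by
      rw [Dm, hB, hBm, hmon]; ring
    have hdeg : (Finsupp.single a b + m).degree = b + m.degree := by
      rw [degree_add', degree_single']
    have hXC : (X a + C (w a) : MvPolynomial (Fin n) F).totalDegree ≤ 1 :=
      (totalDegree_add _ _).trans (by simp)
    have hmono : (monomial m (1:F)).totalDegree ≤ m.degree :=
      (totalDegree_monomial_le _ _).trans (le_of_eq rfl)
    have h1 : (((X a + C (w a)) ^ b - X a ^ b) * monomial m 1).totalDegree ≤ (b - 1) + m.degree := by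
      refine (totalDegree_mul _ _).trans ?_
      have := deg_binom a (w a) b
      omega
    have h2 : ((X a + C (w a)) ^ b * Dm w m).totalDegree ≤ b + (m.degree - 1) := by
      refine (totalDegree_mul _ _).trans ?_
      have hp : ((X a + C (w a)) ^ b : MvPolynomial (Fin n) F).totalDegree ≤ b :=
        (totalDegree_pow _ _).trans (by nlinarith [hXC])
      omega
    rw [key, hdeg]
    by_cases hm0 : m = 0
    · subst hm0
      simp only [Dm_zero, mul_zero, add_zero]
      refine (totalDegree_mul _ _).trans ?_
      have := deg_binom a (w a) b
      simp only [map_zero]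
      have : (monomial (0 : Fin n →₀ ℕ) (1:F)).totalDegree = 0 := by
        simp [monomial_zero']
      omega
    · have hm1 : 1 ≤ m.degree := by
        rw [Nat.one_le_iff_ne_zero]
        simpa [Finsupp.degree_eq_zero_iff] using hm0
      refine (totalDegree_add _ _).trans ?_
      have := deg_binom a (w a) b
      simp only [max_le_iff]
      omega

lemma pdd_eq_sum (w : Fin n → F) (q : MvPolynomial (Fin n) F) :
    pdd w q = ∑ m ∈ q.support, C (coeff m q) * Dm w m := by
  rw [pdd]
  conv_lhs => rw [as_sum q]
  rw [map_sum, ← Finset.sum_sub_distrib]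
  refine Finset.sum_congr rfl fun m hm => ?_
  have hmono : monomial m (coeff m q) = C (coeff m q) * monomial m (1:F) := by
    rw [C_mul_monomial, mul_one]
  rw [Dm, mul_sub, hmono, map_mul, bind₁_C_right]

lemma totalDegree_pdd_le (w : Fin n → F) (q : MvPolynomial (Fin n) F) {k : ℕ}
    (h : q.totalDegree ≤ k + 1) : (pdd w q).totalDegree ≤ k := by
  rw [pdd_eq_sum]
  refine (totalDegree_finset_sum _ _).trans (Finset.sup_le fun m hm => ?_)
  refine (totalDegree_mul _ _).trans ?_
  have h1 : m.degree ≤ k + 1 := le_trans (le_totalDegree hm) h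
  have h2 := deg_Dm w m
  simp only [totalDegree_C, zero_add]
  omega

lemma pdd_eq_zero_of_deg_zero (w : Fin n → F) (q : MvPolynomial (Fin n) F)
    (h : q.totalDegree = 0) : pdd w q = 0 := by
  rw [pdd_eq_sum]
  refine Finset.sum_eq_zero fun m hm => ?_
  have h1 : m.degree = 0 := Nat.le_zero.mp (le_of_le_of_eq (le_totalDegree hm) h)
  rw [Finsupp.degree_eq_zero_iff] at h1
  rw [h1, Dm_zero, mul_zero]

/-- Polynomial iterated discrete derivative. -/
noncomputable def pIter : (d : ℕ) → (Fin d → (Fin n → F)) → MvPolynomial (Fin n) F → MvPolynomial (Fin n) F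
  | 0, _, q => q
  | d + 1, v, q => pdd (v (Fin.last d)) (pIter d (fun i => v i.castSucc) q)

lemma eval_pIter : ∀ (d : ℕ) (v : Fin d → (Fin n → F)) (q : MvPolynomial (Fin n) F) (z : Fin n → F),
    eval z (pIter d v q) = iterDDeriv d v (fun y => eval y q) z
  | 0, _, _, _ => rfl
  | d + 1, v, q, z => by
    show eval z (pdd (v (Fin.last d)) (pIter d (fun i => v i.castSucc) q)) = discDeriv _ _ z
    rw [eval_pdd, discDeriv, eval_pIter d, eval_pIter d]

lemma deg_pIter : ∀ (d : ℕ) (v : Fin d → (Fin n → F)) (q : MvPolynomial (Fin n) F) (k : ℕ),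
    q.totalDegree ≤ k + d → (pIter d v q).totalDegree ≤ k
  | 0, _, _, _, h => by simpa [pIter] using h
  | d + 1, v, q, k, h => by
    show (pdd _ (pIter d (fun i => v i.castSucc) q)).totalDegree ≤ k
    exact totalDegree_pdd_le _ _ (deg_pIter d _ q (k + 1) (by omega))

lemma iterDDeriv_eq_sum {V : Type*} [AddCommGroup V] :
    ∀ (d : ℕ) (v : Fin d → V) (f : V → F) (x : V),
    iterDDeriv d v f x
      = ∑ ε : Fin d → Bool, (∏ t, if ε t then (1 : F) else -1) *
          f (x + ∑ t, if ε t then v t else 0)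
  | 0, v, f, x => by
    rw [Fintype.sum_unique]
    simp [iterDDeriv]
  | d + 1, v, f, x => by
    show discDeriv (v (Fin.last d)) (iterDDeriv d (fun i => v i.castSucc) f) x = _
    rw [discDeriv, iterDDeriv_eq_sum d, iterDDeriv_eq_sum d]
    rw [← Equiv.sum_comp (Fin.snocEquiv (fun _ => Bool)), Fintype.sum_prod_type, Fintype.sum_bool]
    have h1 : ∀ ε : Fin d → Bool,
        (∏ t : Fin (d+1), if Fin.snocEquiv (fun _ => Bool) (true, ε) t then (1:F) else -1) *
          f (x + ∑ t : Fin (d+1), if Fin.snocEquiv (fun _ => Bool) (true, ε) t then v t else 0)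
        = (∏ t : Fin d, if ε t then (1:F) else -1) *
          f ((x + v (Fin.last d)) + ∑ t : Fin d, if ε t then v t.castSucc else 0) := by
      intro ε
      rw [Fin.prod_univ_castSucc, Fin.sum_univ_castSucc]
      simp only [Fin.snocEquiv_apply, Fin.snoc_castSucc, Fin.snoc_last, if_true, mul_one]
      congr 2
      abel
    have h2 : ∀ ε : Fin d → Bool,
        (∏ t : Fin (d+1), if Fin.snocEquiv (fun _ => Bool) (false, ε) t then (1:F) else -1) *
          f (x + ∑ t : Fin (d+1), if Fin.snocEquiv (fun _ => Bool) (false, ε) t then v t else 0)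
        = -((∏ t : Fin d, if ε t then (1:F) else -1) *
          f (x + ∑ t : Fin d, if ε t then v t.castSucc else 0)) := by
      intro ε
      rw [Fin.prod_univ_castSucc, Fin.sum_univ_castSucc]
      simp only [Fin.snocEquiv_apply, Fin.snoc_castSucc, Fin.snoc_last]
      norm_num
    rw [Finset.sum_congr rfl (fun ε _ => h1 ε), Finset.sum_congr rfl (fun ε _ => h2 ε)]
    rw [Finset.sum_neg_distrib]
    ring

end CommRing

section Field
variable {F : Type*} [Field F] {n : ℕ}

lemma eval_smul_of_isHomogeneous {g : MvPolynomial (Fin n) F} {k : ℕ}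
    (hg : g.IsHomogeneous k) (c : F) (x : Fin n → F) :
    eval (c • x) g = c ^ k * eval x g := by
  rw [eval_eq, eval_eq, Finset.mul_sum]
  refine Finset.sum_congr rfl fun m hm => ?_
  have hdeg : m.degree = k := by
    rw [Finsupp.degree_eq_weight_one]
    exact hg (mem_support_iff.mp hm)
  have hprod : (∏ i ∈ m.support, (c • x) i ^ m i) = c ^ k * ∏ i ∈ m.support, x i ^ m i := by
    simp only [Pi.smul_apply, smul_eq_mul, mul_pow, Finset.prod_mul_distrib,
      Finset.prod_pow_eq_pow_sum]
    rw [show (∑ i ∈ m.support, m i) = k from hdeg]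
  rw [hprod]; ring

lemma center_vanish {d : ℕ} {g : MvPolynomial (Fin n) F} (hg : g.IsHomogeneous (d + 1))
    (h2 : (2 : F) ≠ 0) (v : Fin d → (Fin n → F)) :
    ∑ ε : Fin d → Bool, (∏ t, if ε t then (1 : F) else -1) *
      eval (-((2 : F)⁻¹ • ∑ t, v t) + ∑ t, if ε t then v t else 0) g = 0 := by
  set S : Fin n → F := ∑ t, v t with hS
  set u : (Fin d → Bool) → (Fin n → F) :=
    fun ε => -((2 : F)⁻¹ • S) + ∑ t, if ε t then v t else 0 with hu
  set T : (Fin d → Bool) → F :=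
    fun ε => (∏ t, if ε t then (1 : F) else -1) * eval (u ε) g with hT
  show ∑ ε, T ε = 0
  have huu : ∀ ε, u (fun t => !(ε t)) = -u ε := by
    intro ε
    have hsum : ((∑ t, if ε t then v t else 0) + ∑ t, if !(ε t) then v t else 0) = S := by
      rw [← Finset.sum_add_distrib]
      refine Finset.sum_congr rfl fun t _ => ?_
      cases h : ε t <;> simp [h]
    have hS2 : (2 : F)⁻¹ • S + (2 : F)⁻¹ • S = S := by
      rw [← add_smul, ← two_mul, mul_inv_cancel₀ h2, one_smul]
    have hadd : u ε + u (fun t => !(ε t)) = 0 := by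
      simp only [hu]
      calc (-((2 : F)⁻¹ • S) + ∑ t, if ε t then v t else 0) +
            (-((2 : F)⁻¹ • S) + ∑ t, if !(ε t) then v t else 0)
          = ((∑ t, if ε t then v t else 0) + ∑ t, if !(ε t) then v t else 0)
              - ((2 : F)⁻¹ • S + (2 : F)⁻¹ • S) := by abel
        _ = 0 := by rw [hsum, hS2, sub_self]
    exact eq_neg_of_add_eq_zero_right hadd
  have hnot : ∀ ε, T ε + T (fun t => !(ε t)) = 0 := by
    intro ε
    have hsgn : (∏ t, if !(ε t) then (1 : F) else -1)
        = (-1) ^ d * ∏ t, if ε t then (1 : F) else -1 := by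
      calc (∏ t, if !(ε t) then (1 : F) else -1)
          = ∏ t : Fin d, (-1) * (if ε t then (1 : F) else -1) := by
            refine Finset.prod_congr rfl fun t _ => ?_
            cases h : ε t <;> simp [h]
        _ = (-1) ^ d * ∏ t, if ε t then (1 : F) else -1 := by
            rw [Finset.prod_mul_distrib, Finset.prod_const, Finset.card_univ, Fintype.card_fin]
    have heval : eval (u fun t => !(ε t)) g = (-1) ^ (d + 1) * eval (u ε) g := by
      rw [huu, show -u ε = (-1 : F) • u ε from (neg_one_smul F (u ε)).symm,
        eval_smul_of_isHomogeneous hg]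
    have hodd : ((-1 : F) ^ d) * ((-1 : F) ^ (d + 1)) = -1 := by
      rw [← pow_add]
      exact Odd.neg_one_pow ⟨d, by ring⟩
    simp only [hT]
    rw [hsgn, heval]
    linear_combination ((∏ t, if ε t then (1 : F) else -1) * eval (u ε) g) * hodd
  have hdouble : (∑ ε, T ε) + (∑ ε, T ε) = 0 := by
    have hcomp := Equiv.sum_comp
      (⟨fun ε t => !(ε t), fun ε t => !(ε t), fun ε => by funext t; simp,
        fun ε => by funext t; simp⟩ : (Fin d → Bool) ≃ (Fin d → Bool)) T
    simp only [Equiv.coe_fn_mk] at hcomp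
    calc (∑ ε, T ε) + (∑ ε, T ε)
        = (∑ ε : Fin d → Bool, T fun t => !(ε t)) + ∑ ε, T ε := by rw [hcomp]
      _ = ∑ ε, (T (fun t => !(ε t)) + T ε) := by rw [Finset.sum_add_distrib]
      _ = 0 := Finset.sum_eq_zero fun ε _ => by rw [add_comm]; exact hnot ε
  have h2sum : (2 : F) * ∑ ε, T ε = 0 := by rw [two_mul]; exact hdouble
  rcases mul_eq_zero.mp h2sum with h | h
  · exact absurd h h2
  · exact h

end Field

end Stmt15Aux

theorem stmt15 {F : Type*} [Field F] (hchar : ringChar F ≠ 2) {n d : ℕ} (hd : 1 ≤ d)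
    (g : MvPolynomial (Fin n) F) (hg : g.IsHomogeneous (d + 1))
    (v : Fin d → (Fin n → F)) (x y : Fin n → F) :
    iterDDeriv d v (fun z => eval z g) x
      = iterDDeriv (d + 1) (Fin.snoc v (x + (2 : F)⁻¹ • ∑ t, v t)) (fun z => eval z g) y := by
  classical
  have h2 : (2 : F) ≠ 0 := Ring.two_ne_zero hchar
  have hfun : (fun i : Fin d => (Fin.snoc v (x + (2 : F)⁻¹ • ∑ t, v t) :
      Fin (d + 1) → (Fin n → F)) (Fin.castSucc i)) = v := by
    funext i; simp
  have hrhs : iterDDeriv (d + 1) (Fin.snoc v (x + (2 : F)⁻¹ • ∑ t, v t)) (fun z => eval z g) y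
      = iterDDeriv d v (fun z => eval z g) (y + (x + (2 : F)⁻¹ • ∑ t, v t))
        - iterDDeriv d v (fun z => eval z g) y := by
    show discDeriv ((Fin.snoc v (x + (2 : F)⁻¹ • ∑ t, v t) : Fin (d + 1) → (Fin n → F))
          (Fin.last d))
        (iterDDeriv d (fun i => (Fin.snoc v (x + (2 : F)⁻¹ • ∑ t, v t) :
            Fin (d + 1) → (Fin n → F)) (Fin.castSucc i))
          (fun z => eval z g)) y = _
    rw [hfun, discDeriv, Fin.snoc_last]
  rw [hrhs]
  have hQe : ∀ z, iterDDeriv d v (fun z => eval z g) z = eval z (Stmt15Aux.pIter d v g) :=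
    fun z => (Stmt15Aux.eval_pIter d v g z).symm
  have hQdeg : (Stmt15Aux.pIter d v g).totalDegree ≤ 1 :=
    Stmt15Aux.deg_pIter d v g 1 (by have := hg.totalDegree_le; omega)
  have haff : ∀ z w2 w1 : Fin n → F,
      eval (z + w2 + w1) (Stmt15Aux.pIter d v g) - eval (z + w2) (Stmt15Aux.pIter d v g)
        - (eval (z + w1) (Stmt15Aux.pIter d v g) - eval z (Stmt15Aux.pIter d v g)) = 0 := by
    intro z w2 w1
    have hzero : Stmt15Aux.pdd w2 (Stmt15Aux.pdd w1 (Stmt15Aux.pIter d v g)) = 0 := by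
      apply Stmt15Aux.pdd_eq_zero_of_deg_zero
      have := Stmt15Aux.totalDegree_pdd_le w1 (Stmt15Aux.pIter d v g) (k := 0) (by omega)
      omega
    have h := congrArg (eval z) hzero
    rw [Stmt15Aux.eval_pdd, Stmt15Aux.eval_pdd, Stmt15Aux.eval_pdd] at h
    simpa using h
  have hcen : eval (-((2 : F)⁻¹ • ∑ t, v t)) (Stmt15Aux.pIter d v g) = 0 := by
    rw [← hQe, Stmt15Aux.iterDDeriv_eq_sum]
    simpa using Stmt15Aux.center_vanish hg h2 v
  have h1 := haff (-((2 : F)⁻¹ • ∑ t, v t)) (y + (2 : F)⁻¹ • ∑ t, v t) (x + (2 : F)⁻¹ • ∑ t, v t)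
  have e1 : -((2 : F)⁻¹ • ∑ t, v t) + (y + (2 : F)⁻¹ • ∑ t, v t) + (x + (2 : F)⁻¹ • ∑ t, v t)
      = y + (x + (2 : F)⁻¹ • ∑ t, v t) := by abel
  have e2 : -((2 : F)⁻¹ • ∑ t, v t) + (y + (2 : F)⁻¹ • ∑ t, v t) = y := by abel
  have e3 : -((2 : F)⁻¹ • ∑ t, v t) + (x + (2 : F)⁻¹ • ∑ t, v t) = x := by abel
  rw [e1, e2, e3, hcen] at h1
  rw [hQe, hQe, hQe]
  linear_combination -h1
end

section
/- Let F be a finite field with char(F) ≠ 2, let d ≥ 1, and let f : F^n → F be a polynomial map of degree at most d+1 with homogeneous components g = f_{d+1} (degree d+1) and h = f_d (degree d). Let g̃ and h̃ denote the polarizations of g and h (a (d+1)-linear and a d-linear form, respectively), and for c ∈ F^n let ∂_c g̃ denote the d-linear form (v^(1),…,v^(d)) ↦ g̃(v^(1),…,v^(d), c). Then both of the following hold: (i) bias(Δ^d f) ≤ bias(g̃), and (ii) bias(Δ^d f) ≤ E_{c ∈ F^n} bias(h̃ − ∂_c g̃). -/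
open MvPolynomial

section Stmt17Aux

open MvPolynomial Finset

/-! ### Generalities about `iterDDeriv` -/

lemma iterDDeriv_succ {V F : Type*} [Add V] [Sub F] (d : ℕ) (v : Fin (d + 1) → V) (f : V → F) :
    iterDDeriv (d + 1) v f =
      discDeriv (v (Fin.last d)) (iterDDeriv d (fun i => v i.castSucc) f) := rfl

lemma discDeriv_comm {V F : Type*} [AddCommMonoid V] [AddCommGroup F] (a b : V) (f : V → F) :
    discDeriv a (discDeriv b f) = discDeriv b (discDeriv a f) := by
  funext x
  simp only [discDeriv]
  rw [add_right_comm]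
  abel

lemma iterDDeriv_discDeriv {V F : Type*} [AddCommMonoid V] [AddCommGroup F] (k : ℕ) :
    ∀ (v : Fin k → V) (u : V) (f : V → F),
      iterDDeriv k v (discDeriv u f) = discDeriv u (iterDDeriv k v f) := by
  induction k with
  | zero => intro v u f; rfl
  | succ k ih =>
    intro v u f
    rw [iterDDeriv_succ, ih, discDeriv_comm, iterDDeriv_succ]

lemma iterDDeriv_succ_left {V F : Type*} [AddCommMonoid V] [AddCommGroup F] (k : ℕ) :
    ∀ (w : Fin (k + 1) → V) (f : V → F),
      iterDDeriv (k + 1) w f = iterDDeriv k (fun i => w i.succ) (discDeriv (w 0) f) := by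
  induction k with
  | zero => intro w f; rfl
  | succ k ih =>
    intro w f
    rw [iterDDeriv_succ (k + 1) w f, ih (fun i => w i.castSucc) f, iterDDeriv_succ]
    simp only [Fin.castSucc_zero, Fin.succ_last, Fin.succ_castSucc]

lemma discDeriv_add {V F : Type*} [Add V] [AddCommGroup F] (u : V) (f g : V → F) :
    discDeriv u (fun x => f x + g x) = fun x => discDeriv u f x + discDeriv u g x := by
  funext x; simp only [discDeriv]; abel

lemma iterDDeriv_add {V F : Type*} [Add V] [AddCommGroup F] (k : ℕ) :
    ∀ (v : Fin k → V) (f g : V → F),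
      iterDDeriv k v (fun x => f x + g x) = fun x => iterDDeriv k v f x + iterDDeriv k v g x := by
  induction k with
  | zero => intro v f g; rfl
  | succ k ih =>
    intro v f g
    rw [iterDDeriv_succ, iterDDeriv_succ, iterDDeriv_succ, ih, discDeriv_add]

lemma iterDDeriv_zero_fun {V F : Type*} [Add V] [AddCommGroup F] (k : ℕ) :
    ∀ (v : Fin k → V), iterDDeriv k v (fun _ => (0 : F)) = fun _ => (0 : F) := by
  induction k with
  | zero => intro v; rfl
  | succ k ih =>
    intro v
    rw [iterDDeriv_succ, ih]
    funext x; simp [discDeriv]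

lemma iterDDeriv_finset_sum {V F ι : Type*} [Add V] [AddCommGroup F] (k : ℕ)
    (v : Fin k → V) (s : Finset ι) (G : ι → V → F) :
    iterDDeriv k v (fun x => ∑ i ∈ s, G i x) = fun x => ∑ i ∈ s, iterDDeriv k v (G i) x := by
  induction s using Finset.cons_induction with
  | empty => simpa using iterDDeriv_zero_fun k v
  | cons a s ha ih =>
    simp only [Finset.sum_cons]
    rw [iterDDeriv_add, ih]

lemma iterDDeriv_const_mul {V F : Type*} [Add V] [Field F] (k : ℕ) :
    ∀ (v : Fin k → V) (a : F) (f : V → F),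
      iterDDeriv k v (fun x => a * f x) = fun x => a * iterDDeriv k v f x := by
  induction k with
  | zero => intro v a f; rfl
  | succ k ih =>
    intro v a f
    rw [iterDDeriv_succ, iterDDeriv_succ, ih]
    funext x; simp only [discDeriv]; ring

lemma iterDDeriv_reflect {V F : Type*} [AddCommGroup V] [Field F] (k : ℕ) :
    ∀ (v : Fin k → V) (G : V → F) (x : V),
      iterDDeriv k v (fun y => G (-y)) x = (-1 : F) ^ k * iterDDeriv k v G (-x - ∑ i, v i) := by
  induction k with
  | zero => intro v G x; simp [iterDDeriv]
  | succ k ih =>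
    intro v G x
    rw [iterDDeriv_succ, iterDDeriv_succ]
    simp only [discDeriv]
    rw [ih, ih, Fin.sum_univ_castSucc (f := fun i => v i)]
    have e2 : -(x + v (Fin.last k)) - (∑ i : Fin k, v i.castSucc) =
        -x - ((∑ i : Fin k, v i.castSucc) + v (Fin.last k)) := by abel
    have e1 : -x - ((∑ i : Fin k, v i.castSucc) + v (Fin.last k)) + v (Fin.last k) =
        -x - (∑ i : Fin k, v i.castSucc) := by abel
    rw [e2, e1]
    ring

/-! ### Shift of a polynomial and degrees -/

variable {F : Type*} [Field F] {n : ℕ}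

lemma eval_shift (v x : Fin n → F) (p : MvPolynomial (Fin n) F) :
    eval x (aeval (fun i => X i + C (v i)) p) = eval (x + v) p := by
  induction p using MvPolynomial.induction_on with
  | C a => simp
  | add p q hp hq => simp only [map_add, hp, hq]
  | mul_X p i hp =>
    simp only [map_mul, aeval_X, eval_mul, eval_add, eval_X, eval_C, hp, Pi.add_apply]

lemma totalDegree_add_pow_sub (i : Fin n) (c : F) (e : ℕ) :
    ((X i + C c) ^ e - (X i : MvPolynomial (Fin n) F) ^ e).totalDegree ≤ e - 1 := by
  cases e with
  | zero => simp
  | succ e =>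
    rw [add_pow, Finset.sum_range_succ]
    simp only [Nat.choose_self, Nat.cast_one, mul_one, Nat.sub_self, pow_zero]
    rw [add_sub_cancel_right]
    refine le_trans (totalDegree_finset_sum _ _) (Finset.sup_le fun j hj => ?_)
    rw [Finset.mem_range] at hj
    calc (X i ^ j * C c ^ (e + 1 - j) * ((e + 1).choose j : MvPolynomial (Fin n) F)).totalDegree
        ≤ (X i ^ j * C c ^ (e + 1 - j)).totalDegree
            + ((((e + 1).choose j : ℕ)) : MvPolynomial (Fin n) F).totalDegree :=
          totalDegree_mul _ _
      _ ≤ ((X i ^ j).totalDegree + (C c ^ (e + 1 - j)).totalDegree) + 0 := by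
          rw [← map_natCast (C : F →+* MvPolynomial (Fin n) F), totalDegree_C]
          exact Nat.add_le_add_right (totalDegree_mul _ _) 0
      _ ≤ (j * 1 + (e + 1 - j) * 0) + 0 := by
          refine Nat.add_le_add_right (add_le_add ?_ ?_) 0
          · exact le_trans (totalDegree_pow _ _) (by rw [totalDegree_X])
          · exact le_trans (totalDegree_pow _ _) (by rw [totalDegree_C])
      _ ≤ e + 1 - 1 := by omega

lemma totalDegree_shift_monomial_le (v : Fin n → F) (m : Fin n →₀ ℕ) (a : F) :
    (aeval (fun i => X i + C (v i)) (monomial m a)).totalDegree ≤ m.sum fun _ e => e := by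
  rw [aeval_monomial]
  refine le_trans (totalDegree_mul _ _) ?_
  rw [MvPolynomial.algebraMap_eq, totalDegree_C, zero_add]
  refine le_trans (totalDegree_finset_prod _ _) ?_
  rw [Finsupp.sum]
  refine Finset.sum_le_sum fun i _ => ?_
  refine le_trans (totalDegree_pow _ _) ?_
  have : (X i + C (v i) : MvPolynomial (Fin n) F).totalDegree ≤ 1 := by
    refine le_trans (totalDegree_add _ _) ?_
    simp [totalDegree_X, totalDegree_C]
  calc m i * (X i + C (v i) : MvPolynomial (Fin n) F).totalDegree ≤ m i * 1 :=
        Nat.mul_le_mul_left _ this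
    _ = m i := Nat.mul_one _

lemma totalDegree_shift_le (v : Fin n → F) (p : MvPolynomial (Fin n) F) :
    (aeval (fun i => X i + C (v i)) p).totalDegree ≤ p.totalDegree := by
  conv_lhs => rw [p.as_sum]
  rw [map_sum]
  refine le_trans (totalDegree_finset_sum _ _) (Finset.sup_le fun m hm => ?_)
  exact le_trans (totalDegree_shift_monomial_le v m _) (le_totalDegree hm)

lemma totalDegree_shift_monomial_sub_le (v : Fin n → F) (m : Fin n →₀ ℕ) :
    ∀ (a : F) (k : ℕ), (m.sum fun _ e => e) ≤ k + 1 →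
      (aeval (fun i => X i + C (v i)) (monomial m a) - monomial m a).totalDegree ≤ k := by
  induction m using Finsupp.induction with
  | zero =>
    intro a k _
    have : (monomial (0 : Fin n →₀ ℕ) a : MvPolynomial (Fin n) F) = C a := by
      rw [C_apply]
    rw [this]
    simp
  | single_add i e m hi he ih =>
    intro a k hk
    have hmono : (monomial (Finsupp.single i e + m) a : MvPolynomial (Fin n) F)
        = X i ^ e * monomial m a := by
      rw [X_pow_eq_monomial, monomial_mul, one_mul]
    have hdegm : (Finsupp.single i e + m).sum (fun _ e => e) = e + m.sum fun _ e => e := by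
      rw [Finsupp.sum_add_index' (fun _ => rfl) (fun _ _ _ => rfl), Finsupp.sum_single_index rfl]
    rw [hdegm] at hk
    have key : aeval (fun i => X i + C (v i)) (monomial (Finsupp.single i e + m) a)
          - monomial (Finsupp.single i e + m) a
        = (aeval (fun i => X i + C (v i)) ((X i : MvPolynomial (Fin n) F) ^ e) - X i ^ e)
              * aeval (fun i => X i + C (v i)) (monomial m a)
          + X i ^ e * (aeval (fun i => X i + C (v i)) (monomial m a) - monomial m a) := by
      rw [hmono]
      rw [map_mul (aeval (fun i0 : Fin n => X i0 + C (v i0)))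
        ((X i : MvPolynomial (Fin n) F) ^ e) (monomial m a)]
      ring
    rw [key]
    have hXe : aeval (fun i => X i + C (v i)) ((X i : MvPolynomial (Fin n) F) ^ e)
        = (X i + C (v i)) ^ e := by simp
    refine le_trans (totalDegree_add _ _) (max_le ?_ ?_)
    · refine le_trans (totalDegree_mul _ _) ?_
      have h1 : (aeval (fun i => X i + C (v i)) ((X i : MvPolynomial (Fin n) F) ^ e)
          - X i ^ e).totalDegree ≤ e - 1 := by
        rw [hXe]; exact totalDegree_add_pow_sub i (v i) e
      have h2 := totalDegree_shift_monomial_le v m a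
      omega
    · by_cases hm0 : m = 0
      · subst hm0
        have : (monomial (0 : Fin n →₀ ℕ) a : MvPolynomial (Fin n) F) = C a := by rw [C_apply]
        rw [this]
        simp
      · have hms : 1 ≤ m.sum fun _ e => e := by
          rcases Finsupp.ne_iff.mp hm0 with ⟨j, hj⟩
          simp only [Finsupp.coe_zero, Pi.zero_apply] at hj
          calc 1 ≤ m j := Nat.one_le_iff_ne_zero.mpr hj
            _ ≤ m.sum fun _ e => e := by
                rw [Finsupp.sum]
                exact Finset.single_le_sum (fun _ _ => Nat.zero_le _)
                  (Finsupp.mem_support_iff.mpr hj)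
        have hih := ih a ((m.sum fun _ e => e) - 1) (by omega)
        refine le_trans (totalDegree_mul _ _) ?_
        have hXe' : ((X i : MvPolynomial (Fin n) F) ^ e).totalDegree ≤ e := by
          refine le_trans (totalDegree_pow _ _) ?_
          rw [totalDegree_X]; omega
        omega

lemma totalDegree_shift_sub_le (v : Fin n → F) (p : MvPolynomial (Fin n) F) (k : ℕ)
    (h : p.totalDegree ≤ k + 1) :
    (aeval (fun i => X i + C (v i)) p - p).totalDegree ≤ k := by
  have hrw : aeval (fun i => X i + C (v i)) p - p
      = ∑ m ∈ p.support, (aeval (fun i => X i + C (v i)) (monomial m (coeff m p))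
          - monomial m (coeff m p)) := by
    rw [Finset.sum_sub_distrib, ← map_sum, ← p.as_sum]
  rw [hrw]
  refine le_trans (totalDegree_finset_sum _ _) (Finset.sup_le fun m hm => ?_)
  exact totalDegree_shift_monomial_sub_le v m _ k (le_trans (le_totalDegree hm) h)

/-! ### Iterated derivatives of polynomial maps -/

lemma discDeriv_eval (v : Fin n → F) (p : MvPolynomial (Fin n) F) :
    discDeriv v (fun x => eval x p)
      = fun x => eval x (aeval (fun i => X i + C (v i)) p - p) := by
  funext x
  simp only [discDeriv, map_sub, eval_shift]

lemma exists_iterDDeriv_eval (k : ℕ) :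
    ∀ (v : Fin k → (Fin n → F)) (p : MvPolynomial (Fin n) F),
      ∃ q : MvPolynomial (Fin n) F, (∀ j, p.totalDegree ≤ j + k → q.totalDegree ≤ j) ∧
        iterDDeriv k v (fun x => eval x p) = fun x => eval x q := by
  induction k with
  | zero =>
    intro v p
    exact ⟨p, fun j hj => by simpa using hj, rfl⟩
  | succ k ih =>
    intro v p
    rw [iterDDeriv_succ_left, discDeriv_eval]
    obtain ⟨q, hq, hq2⟩ := ih (fun i => v i.succ) (aeval (fun i => X i + C ((v 0) i)) p - p)
    refine ⟨q, fun j hj => hq j ?_, hq2⟩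
    exact totalDegree_shift_sub_le _ p (j + k) (by omega)

lemma eval_congr_of_totalDegree_zero {q : MvPolynomial (Fin n) F} (h : q.totalDegree ≤ 0)
    (x y : Fin n → F) : eval x q = eval y q := by
  rw [eval_eq, eval_eq]
  refine Finset.sum_congr rfl fun m hm => ?_
  have hm0 : m = 0 := by
    ext i
    exact (totalDegree_eq_zero_iff (Fin n) q).mp (Nat.le_zero.mp h) m hm i
  subst hm0
  simp

lemma iterDDeriv_eval_const (k : ℕ) (v : Fin k → (Fin n → F)) (p : MvPolynomial (Fin n) F)
    (h : p.totalDegree ≤ k) (x y : Fin n → F) :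
    iterDDeriv k v (fun x => eval x p) x = iterDDeriv k v (fun x => eval x p) y := by
  obtain ⟨q, hq, hq2⟩ := exists_iterDDeriv_eval k v p
  rw [hq2]
  exact eval_congr_of_totalDegree_zero (hq 0 (by omega)) x y

lemma iterDDeriv_eval_zero (k : ℕ) (v : Fin k → (Fin n → F)) (p : MvPolynomial (Fin n) F)
    (h : p.totalDegree < k) (x : Fin n → F) :
    iterDDeriv k v (fun x => eval x p) x = 0 := by
  cases k with
  | zero => omega
  | succ k =>
    rw [iterDDeriv_succ]
    simp only [discDeriv]
    rw [iterDDeriv_eval_const k _ p (by omega) (x + v (Fin.last k)) x, sub_self]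

lemma eval_neg_homogeneous {g : MvPolynomial (Fin n) F} {k : ℕ} (hg : g.IsHomogeneous k)
    (y : Fin n → F) : eval (-y) g = (-1 : F) ^ k * eval y g := by
  rw [eval_eq, eval_eq, Finset.mul_sum]
  refine Finset.sum_congr rfl fun m hm => ?_
  have hdeg : ∑ i ∈ m.support, m i = k := by
    have := hg (mem_support_iff.mp hm)
    rw [← this]
    rw [show ((Finsupp.weight 1) m : ℕ) = m.degree from
      by rw [Finsupp.degree_eq_weight_one]; rfl]
    rfl
  have hprod : ∏ i ∈ m.support, (-y) i ^ m i
      = (-1 : F) ^ k * ∏ i ∈ m.support, y i ^ m i := by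
    rw [← hdeg, ← Finset.prod_pow_eq_pow_sum, ← Finset.prod_mul_distrib]
    refine Finset.prod_congr rfl fun i _ => ?_
    rw [Pi.neg_apply, neg_pow]
  rw [hprod]; ring

end Stmt17Aux


section Stmt17Aux2

open MvPolynomial Finset

lemma iterDDeriv_snoc {V F : Type*} [Add V] [Sub F] (d : ℕ) (v : Fin d → V) (c : V)
    (G : V → F) (y : V) :
    iterDDeriv (d + 1) (Fin.snoc v c) G y = iterDDeriv d v G (y + c) - iterDDeriv d v G y := by
  rw [iterDDeriv_succ]
  have h1 : (fun i : Fin d => (Fin.snoc v c : Fin (d + 1) → V) i.castSucc) = v := by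
    funext i; simp
  rw [h1]
  have h2 : (Fin.snoc v c : Fin (d + 1) → V) (Fin.last d) = c := by simp
  rw [h2]
  rfl

variable {F : Type*} [Field F] {n d : ℕ}

/-- `Dg g v c` is `∂_c g̃ (v)`, the order-`d+1` derivative of `g` in directions `v, c` at `0`. -/
noncomputable def DgAux (g : MvPolynomial (Fin n) F) (v : Fin d → Fin n → F)
    (c : Fin n → F) : F :=
  iterDDeriv (d + 1) (Fin.snoc v c) (fun y => eval y g) 0

lemma DgAux_def (g : MvPolynomial (Fin n) F) (v : Fin d → Fin n → F) (c : Fin n → F) :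
    DgAux g v c = iterDDeriv (d + 1) (Fin.snoc v c) (fun y => eval y g) 0 := rfl

noncomputable def HhAux (h : MvPolynomial (Fin n) F) (v : Fin d → Fin n → F) : F :=
  iterDDeriv d v (fun y => eval y h) 0

lemma HhAux_def (h : MvPolynomial (Fin n) F) (v : Fin d → Fin n → F) :
    HhAux h v = iterDDeriv d v (fun y => eval y h) 0 := rfl

lemma DgAux_add (g : MvPolynomial (Fin n) F) (hg : g.totalDegree ≤ d + 1)
    (v : Fin d → Fin n → F) (c₁ c₂ : Fin n → F) :
    DgAux g v (c₁ + c₂) = DgAux g v c₁ + DgAux g v c₂ := by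
  have hc := iterDDeriv_eval_const (d + 1) (Fin.snoc v c₁) g hg c₂ 0
  rw [iterDDeriv_snoc, iterDDeriv_snoc, zero_add, add_comm c₂ c₁] at hc
  simp only [DgAux_def, iterDDeriv_snoc, zero_add]
  linear_combination hc

lemma DgAux_zero (g : MvPolynomial (Fin n) F) (v : Fin d → Fin n → F) :
    DgAux g v 0 = 0 := by
  simp only [DgAux_def, iterDDeriv_snoc, zero_add, sub_self]

lemma DgAux_neg (g : MvPolynomial (Fin n) F) (hg : g.totalDegree ≤ d + 1)
    (v : Fin d → Fin n → F) (c : Fin n → F) :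
    DgAux g v (-c) = -DgAux g v c := by
  have h1 := DgAux_add g hg v c (-c)
  rw [add_neg_cancel, DgAux_zero] at h1
  linear_combination -h1

lemma homog_T0 (h2 : (2 : F) ≠ 0) (g : MvPolynomial (Fin n) F)
    (hg : g.IsHomogeneous (d + 1)) (v : Fin d → Fin n → F) (x : Fin n → F) :
    iterDDeriv d v (fun y => eval y g) x = DgAux g v (x + (2⁻¹ : F) • ∑ i, v i) := by
  have hgdeg : g.totalDegree ≤ d + 1 := hg.totalDegree_le
  have haddT : ∀ c₁ c₂ : Fin n → F,
      DgAux g v (c₁ + c₂) = DgAux g v c₁ + DgAux g v c₂ := DgAux_add g hgdeg v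
  have hττ : ((2⁻¹ : F) • ∑ i, v i) + ((2⁻¹ : F) • ∑ i, v i) = ∑ i, v i := by
    rw [← add_smul]
    have h1 : (2⁻¹ + 2⁻¹ : F) = 1 := by
      rw [← two_mul, mul_inv_cancel₀ h2]
    rw [h1, one_smul]
  have h1 : ∀ y : Fin n → F, (-1 : F) ^ (d + 1) * iterDDeriv d v (fun z => eval z g) y
      = (-1 : F) ^ d * iterDDeriv d v (fun z => eval z g) (-y - ∑ i, v i) := by
    intro y
    have h2' := iterDDeriv_reflect d v (fun z => eval z g) y
    rw [show (fun y0 : Fin n → F => (fun z : Fin n → F => eval z g) (-y0))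
        = fun y0 : Fin n → F => (-1 : F) ^ (d + 1) * eval y0 g from
      funext fun y0 => eval_neg_homogeneous hg y0] at h2'
    rw [iterDDeriv_const_mul] at h2'
    exact h2'
  have h3 := h1 (-((2⁻¹ : F) • ∑ i, v i))
  have harg : ∀ t s : Fin n → F, t + t = s → -(-t) - s = -t := by
    intro t s hts; rw [neg_neg, ← hts]; abel
  rw [harg _ _ hττ] at h3
  have hpow : (-1 : F) ^ (d + 1) = -((-1 : F) ^ d) := by rw [pow_succ]; ring
  rw [hpow] at h3
  have hne : ((-1 : F) ^ d) ≠ 0 := pow_ne_zero _ (by norm_num)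
  have h4 : -iterDDeriv d v (fun z => eval z g) (-((2⁻¹ : F) • ∑ i, v i))
      = iterDDeriv d v (fun z => eval z g) (-((2⁻¹ : F) • ∑ i, v i)) :=
    mul_left_cancel₀ hne (by linear_combination h3)
  have h5 : (2 : F) * iterDDeriv d v (fun z => eval z g) (-((2⁻¹ : F) • ∑ i, v i)) = 0 := by
    linear_combination (-1 : F) * h4
  have hrefl : iterDDeriv d v (fun z => eval z g) (-((2⁻¹ : F) • ∑ i, v i)) = 0 :=
    (mul_eq_zero.mp h5).resolve_left h2
  -- now conclude
  have hxτ := haddT x ((2⁻¹ : F) • ∑ i, v i)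
  have hτnegτ := haddT ((2⁻¹ : F) • ∑ i, v i) (-((2⁻¹ : F) • ∑ i, v i))
  rw [add_neg_cancel, DgAux_zero] at hτnegτ
  -- hτnegτ : 0 = Dg τ + Dg (-τ)
  have hDgτ : DgAux g v ((2⁻¹ : F) • ∑ i, v i)
      = iterDDeriv d v (fun y => eval y g) 0 := by
    have e1 : DgAux g v (-((2⁻¹ : F) • ∑ i, v i))
        = iterDDeriv d v (fun y => eval y g) (-((2⁻¹ : F) • ∑ i, v i))
          - iterDDeriv d v (fun y => eval y g) 0 := by
      simp only [DgAux_def, iterDDeriv_snoc, zero_add]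
    rw [hrefl] at e1
    linear_combination -hτnegτ - e1
  have e2 : DgAux g v x = iterDDeriv d v (fun y => eval y g) x
      - iterDDeriv d v (fun y => eval y g) 0 := by
    simp only [DgAux_def, iterDDeriv_snoc, zero_add]
  linear_combination -hxτ - hDgτ - e2

lemma key_decomp (hchar : ringChar F ≠ 2)
    (f : MvPolynomial (Fin n) F) (hdeg : f.totalDegree ≤ d + 1)
    (v : Fin d → Fin n → F) (x : Fin n → F) :
    iterDDeriv d v (fun y => eval y f) x
      = HhAux (homogeneousComponent d f) v
        + DgAux (homogeneousComponent (d + 1) f) v (x + (2⁻¹ : F) • ∑ i, v i) := by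
  have h2 : (2 : F) ≠ 0 := Ring.two_ne_zero hchar
  have hfsum : (fun y : Fin n → F => eval y f)
      = fun y => ∑ i ∈ Finset.range (d + 2), eval y (homogeneousComponent i f) := by
    have hss : ∑ i ∈ Finset.range (d + 2), homogeneousComponent i f = f := by
      have hsub : Finset.range (f.totalDegree + 1) ⊆ Finset.range (d + 2) := by
        intro i hi; simp only [Finset.mem_range] at hi ⊢; omega
      have hzero : ∀ i ∈ Finset.range (d + 2), i ∉ Finset.range (f.totalDegree + 1) →
          homogeneousComponent i f = 0 := fun i _ hi =>
        homogeneousComponent_eq_zero i f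
          (by simp only [Finset.mem_range, not_lt] at hi; omega)
      conv_rhs => rw [← sum_homogeneousComponent f]
      exact (Finset.sum_subset hsub hzero).symm
    funext y
    conv_lhs => rw [← hss]
    exact map_sum (eval y) _ _
  rw [hfsum, iterDDeriv_finset_sum d v (Finset.range (d + 2))
    (fun i y => eval y (homogeneousComponent i f))]
  simp only [Finset.sum_range_succ]
  have hlow : ∀ i ∈ Finset.range d,
      iterDDeriv d v (fun y => eval y (homogeneousComponent i f)) x = 0 := by
    intro i hi
    exact iterDDeriv_eval_zero d v _
      (lt_of_le_of_lt (homogeneousComponent_isHomogeneous i f).totalDegree_le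
        (Finset.mem_range.mp hi)) x
  rw [Finset.sum_eq_zero hlow, zero_add]
  rw [iterDDeriv_eval_const d v (homogeneousComponent d f)
    (homogeneousComponent_isHomogeneous d f).totalDegree_le x 0]
  rw [homog_T0 h2 (homogeneousComponent (d + 1) f)
    (homogeneousComponent_isHomogeneous (d + 1) f) v x]
  rfl

end Stmt17Aux2


theorem stmt17 {F : Type*} [Field F] [Fintype F] (hchar : ringChar F ≠ 2) {n d : ℕ}
    (hd : 1 ≤ d) (χ : AddChar F ℂ) (hχ : χ ≠ 1)
    (f : MvPolynomial (Fin n) F) (hdeg : f.totalDegree ≤ d + 1) :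
    biasDD χ d (fun x => eval x f) ≤
        bias χ (fun v : Fin (d + 1) → (Fin n → F) =>
          iterDDeriv (d + 1) v (fun x => eval x (homogeneousComponent (d + 1) f)) 0)
      ∧
    biasDD χ d (fun x => eval x f) ≤
        (Fintype.card (Fin n → F) : ℝ)⁻¹ * ∑ c : Fin n → F,
          bias χ (fun v : Fin d → (Fin n → F) =>
            iterDDeriv d v (fun x => eval x (homogeneousComponent d f)) 0
              - iterDDeriv (d + 1) (Fin.snoc v c)
                  (fun x => eval x (homogeneousComponent (d + 1) f)) 0) := by
  classical
  have h2 : (2 : F) ≠ 0 := Ring.two_ne_zero hchar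
  set g : MvPolynomial (Fin n) F := homogeneousComponent (d + 1) f with hgdef
  set h : MvPolynomial (Fin n) F := homogeneousComponent d f with hhdef
  have hgdeg : g.totalDegree ≤ d + 1 :=
    (homogeneousComponent_isHomogeneous (d + 1) f).totalDegree_le
  have key : ∀ (v : Fin d → Fin n → F) (x : Fin n → F),
      iterDDeriv d v (fun y => eval y f) x
        = HhAux h v + DgAux g v (x + (2⁻¹ : F) • ∑ i, v i) := fun v x =>
    key_decomp hchar f hdeg v x
  have hA : (∑ p : (Fin n → F) × (Fin d → Fin n → F),
        χ (iterDDeriv d p.2 (fun y => eval y f) p.1))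
      = ∑ v : Fin d → Fin n → F, ∑ c : Fin n → F, χ (HhAux h v + DgAux g v c) := by
    rw [Fintype.sum_prod_type, Finset.sum_comm]
    refine Finset.sum_congr rfl fun v _ => ?_
    refine Fintype.sum_equiv (Equiv.addRight ((2⁻¹ : F) • ∑ i, v i)) _ _ fun x => ?_
    rw [key v x]
    rfl
  have hA2 : (∑ v : Fin d → Fin n → F, ∑ c : Fin n → F, χ (HhAux h v + DgAux g v c))
      = ∑ c : Fin n → F, ∑ v : Fin d → Fin n → F, χ (HhAux h v - DgAux g v c) := by
    rw [Finset.sum_comm]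
    refine Fintype.sum_equiv (Equiv.neg (Fin n → F)) _ _ fun c => ?_
    refine Finset.sum_congr rfl fun v _ => ?_
    simp only [Equiv.neg_apply]
    rw [DgAux_neg g hgdeg v c, sub_neg_eq_add]
  have hB : (∑ w : Fin (d + 1) → Fin n → F, χ (iterDDeriv (d + 1) w (fun y => eval y g) 0))
      = ∑ v : Fin d → Fin n → F, ∑ c : Fin n → F, χ (DgAux g v c) := by
    have e1 := Fintype.sum_equiv (Fin.snocEquiv (fun _ : Fin (d + 1) => Fin n → F))
      (fun p : (Fin n → F) × (Fin d → Fin n → F) => χ (DgAux g p.2 p.1))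
      (fun w => χ (iterDDeriv (d + 1) w (fun y => eval y g) 0)) (fun p => rfl)
    rw [← e1, Fintype.sum_prod_type, Finset.sum_comm]
  have hS : ∀ v : Fin d → Fin n → F, ∃ r : ℝ, 0 ≤ r ∧
      (∑ c : Fin n → F, χ (DgAux g v c)) = (r : ℂ) := by
    intro v
    set ψ : AddChar (Fin n → F) ℂ :=
      χ.compAddMonoidHom (AddMonoidHom.mk' (fun c => DgAux g v c) (DgAux_add g hgdeg v))
      with hψ
    have hsum : (∑ c : Fin n → F, χ (DgAux g v c)) = ∑ c, ψ c := rfl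
    by_cases h1 : ψ = 1
    · refine ⟨(Fintype.card (Fin n → F) : ℝ), by positivity, ?_⟩
      rw [hsum, AddChar.sum_eq_card_of_eq_one h1]
      push_cast
      ring
    · exact ⟨0, le_refl 0, by rw [hsum, AddChar.sum_eq_zero_of_ne_one h1]; simp⟩
  choose r hr0 hrval using hS
  have hfact : ∀ v : Fin d → Fin n → F,
      (∑ c : Fin n → F, χ (HhAux h v + DgAux g v c)) = χ (HhAux h v) * (r v : ℂ) := by
    intro v
    rw [← hrval v, Finset.mul_sum]
    exact Finset.sum_congr rfl fun c _ => AddChar.map_add_eq_mul χ _ _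
  have habsχ : ∀ a : F, ‖χ a‖ = 1 := fun a => by
    exact AddChar.norm_apply χ a
  have hcard2 : Fintype.card (Fin (d + 1) → Fin n → F)
      = Fintype.card ((Fin n → F) × (Fin d → Fin n → F)) := by
    have c1 : Fintype.card (Fin (d + 1) → Fin n → F) = Fintype.card (Fin n → F) ^ (d + 1) := by
      rw [Fintype.card_fun, Fintype.card_fin]
    have c2 : Fintype.card (Fin d → Fin n → F) = Fintype.card (Fin n → F) ^ d := by
      rw [Fintype.card_fun, Fintype.card_fin]
    rw [Fintype.card_prod, c1, c2, pow_succ, mul_comm]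
  constructor
  · -- part (i)
    unfold biasDD bias cbias
    rw [hA, hcard2, hB]
    simp only [norm_mul, norm_inv, Complex.norm_natCast]
    refine mul_le_mul_of_nonneg_left ?_ (by positivity)
    calc ‖∑ v : Fin d → Fin n → F, ∑ c : Fin n → F, χ (HhAux h v + DgAux g v c)‖
        = ‖∑ v : Fin d → Fin n → F, χ (HhAux h v) * (r v : ℂ)‖ := by
          rw [Finset.sum_congr rfl fun v _ => hfact v]
      _ ≤ ∑ v : Fin d → Fin n → F, ‖χ (HhAux h v) * (r v : ℂ)‖ :=
          norm_sum_le _ _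
      _ = ∑ v : Fin d → Fin n → F, r v := by
          refine Finset.sum_congr rfl fun v _ => ?_
          rw [norm_mul, habsχ, one_mul, Complex.norm_real, Real.norm_eq_abs, abs_of_nonneg (hr0 v)]
      _ = ‖∑ v : Fin d → Fin n → F, ∑ c : Fin n → F, χ (DgAux g v c)‖ := by
          rw [Finset.sum_congr rfl fun v (_ : v ∈ Finset.univ) => hrval v,
            ← Complex.ofReal_sum, Complex.norm_real, Real.norm_eq_abs,
            abs_of_nonneg (Finset.sum_nonneg fun v _ => hr0 v)]
  · -- part (ii)
    unfold biasDD bias cbias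
    simp only [← HhAux_def, ← DgAux_def]
    rw [hA, hA2, Fintype.card_prod]
    simp only [norm_mul, norm_inv, Complex.norm_natCast]
    rw [Nat.cast_mul, mul_inv]
    calc (Fintype.card (Fin n → F) : ℝ)⁻¹ * (Fintype.card (Fin d → Fin n → F) : ℝ)⁻¹
          * ‖∑ c : Fin n → F, ∑ v : Fin d → Fin n → F,
              χ (HhAux h v - DgAux g v c)‖
        ≤ (Fintype.card (Fin n → F) : ℝ)⁻¹ * (Fintype.card (Fin d → Fin n → F) : ℝ)⁻¹
          * ∑ c : Fin n → F, ‖∑ v : Fin d → Fin n → F,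
              χ (HhAux h v - DgAux g v c)‖ := by
          refine mul_le_mul_of_nonneg_left ?_ (by positivity)
          exact norm_sum_le _ _
      _ = (Fintype.card (Fin n → F) : ℝ)⁻¹ * ∑ c : Fin n → F,
            (Fintype.card (Fin d → Fin n → F) : ℝ)⁻¹
              * ‖∑ v : Fin d → Fin n → F, χ (HhAux h v - DgAux g v c)‖ := by
          rw [mul_assoc, Finset.mul_sum]
end
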